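/- arXiv:0811.1678 — 3 statements merged into one kernel-verified Lean document; each statement's English description precedes it below -/
import Mathlib

section
/- Suppose f_n = L. Then P_{2m,n} = P_{2m−1,n₊}. Moreover, for (m',n') ∈ ℤ², Q_{m',n'} equals this element if and only if (m',n') belongs to the set {(3m+1, n)} ∪ {(3m, k) | n+1 ≤ k ≤ n₊}. -/
/-- The relators of the presentation ⟨A, B, C | A² = B² = C² = 1⟩. -/
def rels : Set (FreeGroup (Fin 3)) :=
  {FreeGroup.of 0 * FreeGroup.of 0, FreeGroup.of 1 * FreeGroup.of 1,
   FreeGroup.of 2 * FreeGroup.of 2}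

/-- `G` is the group ⟨A, B, C | A² = B² = C² = 1⟩, the free product of three copies of ℤ/2. -/
abbrev G : Type := PresentedGroup rels

def A : G := PresentedGroup.of 0
def B : G := PresentedGroup.of 1
def C : G := PresentedGroup.of 2

/-- The distinguished element `D = C·B·A`. -/
def D : G := C * B * A

namespace Wrd

abbrev Ltr := Fin 3

def of (i : Ltr) : G := PresentedGroup.of i

lemma of_sq (i : Ltr) : of i * of i = 1 := by
  have h : (PresentedGroup.mk rels) (FreeGroup.of i * FreeGroup.of i) = 1 := by
    apply (QuotientGroup.eq_one_iff _).2
    apply Subgroup.subset_normalClosure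
    fin_cases i
    · exact Or.inl rfl
    · exact Or.inr (Or.inl rfl)
    · exact Or.inr (Or.inr rfl)
  simpa [of, PresentedGroup.of, map_mul] using h

lemma of_inv (i : Ltr) : (of i)⁻¹ = of i := by
  rw [inv_eq_iff_mul_eq_one, of_sq]

def prodG (l : List Ltr) : G := (l.map of).prod

@[simp] lemma prodG_nil : prodG [] = 1 := rfl
@[simp] lemma prodG_cons (a : Ltr) (l : List Ltr) : prodG (a :: l) = of a * prodG l := by
  simp [prodG]
lemma prodG_append (u v : List Ltr) : prodG (u ++ v) = prodG u * prodG v := by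
  simp [prodG]

def step (a : Ltr) : List Ltr → List Ltr
  | [] => [a]
  | b :: t => if a = b then t else a :: b :: t

def red (l : List Ltr) : List Ltr := l.foldr step []

@[simp] lemma red_nil : red [] = [] := rfl
@[simp] lemma red_cons (a : Ltr) (l : List Ltr) : red (a :: l) = step a (red l) := rfl

lemma red_append (u v : List Ltr) : red (u ++ v) = u.foldr step (red v) := by
  simp [red, List.foldr_append]

lemma prodG_step (a : Ltr) (l : List Ltr) : prodG (step a l) = of a * prodG l := by
  cases l with
  | nil => simp [step]
  | cons b t =>
    by_cases h : a = b
    · subst h; simp [step, ← mul_assoc, of_sq]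
    · simp [step, h]

lemma prodG_red (l : List Ltr) : prodG (red l) = prodG l := by
  induction l with
  | nil => rfl
  | cons a t ih => rw [red_cons, prodG_step, ih, prodG_cons]

lemma chain'_step (a : Ltr) (l : List Ltr) (h : l.Chain' (· ≠ ·)) :
    (step a l).Chain' (· ≠ ·) := by
  cases l with
  | nil => simp [step, List.Chain']
  | cons b t =>
    by_cases hab : a = b
    · simp [step, hab]; exact h.tail
    · rw [step]
      simp only [if_neg hab]
      exact List.isChain_cons_cons.2 ⟨hab, h⟩

lemma chain'_red (l : List Ltr) : (red l).Chain' (· ≠ ·) := by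
  induction l with
  | nil => simp [List.Chain']
  | cons a t ih => exact chain'_step a _ ih

lemma red_of_chain' : ∀ l : List Ltr, l.Chain' (· ≠ ·) → red l = l := by
  intro l h
  induction l with
  | nil => rfl
  | cons a t ih =>
    rw [red_cons, ih h.tail]
    cases t with
    | nil => rfl
    | cons b t' =>
      have : a ≠ b := List.isChain_cons_cons.1 h |>.1
      simp [step, this]

end Wrd

namespace Wrd

def RW := {l : List Ltr // l.Chain' (· ≠ ·)}

lemma step_step (a : Ltr) (l : List Ltr) (h : l.Chain' (· ≠ ·)) :
    step a (step a l) = l := by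
  cases l with
  | nil => simp [step]
  | cons b t =>
    by_cases hab : a = b
    · subst hab
      rw [step, if_pos rfl]
      cases t with
      | nil => simp [step]
      | cons c t' =>
        have : a ≠ c := List.isChain_cons_cons.1 h |>.1
        simp [step, this]
    · rw [step, if_neg hab, step, if_pos rfl]

def stepE (a : Ltr) : Equiv.Perm RW where
  toFun l := ⟨step a l.1, chain'_step a l.1 l.2⟩
  invFun l := ⟨step a l.1, chain'_step a l.1 l.2⟩
  left_inv l := Subtype.ext (step_step a l.1 l.2)
  right_inv l := Subtype.ext (step_step a l.1 l.2)

lemma stepE_sq (a : Ltr) : stepE a * stepE a = 1 := by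
  apply Equiv.ext
  intro l
  rw [Equiv.Perm.mul_apply, Equiv.Perm.one_apply]
  exact Subtype.ext (step_step a l.1 l.2)

def ψ : G →* Equiv.Perm RW :=
  PresentedGroup.toGroup (f := stepE) (by
    intro r hr
    rcases hr with h | h | h <;> subst h <;>
      simp only [map_mul, FreeGroup.lift_apply_of] <;> exact stepE_sq _)

@[simp] lemma ψ_of (a : Ltr) : ψ (of a) = stepE a := PresentedGroup.toGroup.of _

lemma ψ_prodG (l : List Ltr) :
    (ψ (prodG l) ⟨[], List.IsChain.nil⟩ : RW).1 = red l := by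
  induction l with
  | nil => simp [prodG]; rfl
  | cons a t ih =>
    rw [prodG_cons, map_mul, ψ_of]
    rw [red_cons, ← ih]
    rfl

lemma prodG_inj {u v : List Ltr} (h : prodG u = prodG v) : red u = red v := by
  have := congrArg (fun g => (ψ g ⟨[], List.IsChain.nil⟩ : RW).1) h
  simpa [ψ_prodG] using this

lemma prodG_eq_iff {u v : List Ltr} : prodG u = prodG v ↔ red u = red v :=
  ⟨prodG_inj, fun h => by rw [← prodG_red u, ← prodG_red v, h]⟩

lemma prodG_chain_inj {u v : List Ltr} (hu : u.Chain' (· ≠ ·)) (hv : v.Chain' (· ≠ ·))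
    (h : prodG u = prodG v) : u = v := by
  have := prodG_inj h
  rwa [red_of_chain' u hu, red_of_chain' v hv] at this

end Wrd

namespace Wrd

def rimg : Ltr → List Ltr
  | 0 => [0]
  | 1 => [1, 2, 1]
  | 2 => [1]

def limg : Ltr → List Ltr
  | 0 => [1]
  | 1 => [1, 0, 1]
  | 2 => [2]

def subR (l : List Ltr) : List Ltr := l.flatMap rimg
def subL (l : List Ltr) : List Ltr := l.flatMap limg

lemma subR_cons (a : Ltr) (l : List Ltr) : subR (a :: l) = rimg a ++ subR l := by
  simp [subR]
lemma subL_cons (a : Ltr) (l : List Ltr) : subL (a :: l) = limg a ++ subL l := by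
  simp [subL]

def ShapeR (v o : List Ltr) : Prop :=
  (v = [] ∧ o = []) ∨
  ((∃ w, v = 0 :: w) ∧ (∃ t, o = 0 :: t)) ∨
  ((∃ w, v = 1 :: w) ∧ (∃ t, o = 1 :: 2 :: t)) ∨
  (v = [2] ∧ o = [1]) ∨
  ((∃ w, v = 2 :: 0 :: w) ∧ (∃ t, o = 1 :: 0 :: t)) ∨
  ((∃ w, v = 2 :: 1 :: w) ∧ (∃ t, o = 2 :: t))

def ShapeL (v o : List Ltr) : Prop :=
  (v = [] ∧ o = []) ∨
  ((∃ w, v = 2 :: w) ∧ (∃ t, o = 2 :: t)) ∨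
  ((∃ w, v = 1 :: w) ∧ (∃ t, o = 1 :: 0 :: t)) ∨
  (v = [0] ∧ o = [1]) ∨
  ((∃ w, v = 0 :: 2 :: w) ∧ (∃ t, o = 1 :: 2 :: t)) ∨
  ((∃ w, v = 0 :: 1 :: w) ∧ (∃ t, o = 0 :: t))

lemma shapeR_zero {w o : List Ltr} (h : ShapeR (0 :: w) o) : ∃ t, o = 0 :: t := by
  rcases h with ⟨h, _⟩ | ⟨_, h⟩ | ⟨⟨w', h⟩, _⟩ | ⟨h, _⟩ | ⟨⟨w', h⟩, _⟩ | ⟨⟨w', h⟩, _⟩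
  · simp at h
  · exact h
  all_goals (injection h with h1 _; exact absurd h1 (by decide))

lemma shapeR_one {w o : List Ltr} (h : ShapeR (1 :: w) o) : ∃ t, o = 1 :: 2 :: t := by
  rcases h with ⟨h, _⟩ | ⟨⟨w', h⟩, _⟩ | ⟨_, h⟩ | ⟨h, _⟩ | ⟨⟨w', h⟩, _⟩ | ⟨⟨w', h⟩, _⟩
  · simp at h
  · injection h with h1 _; exact absurd h1 (by decide)
  · exact h
  all_goals (injection h with h1 _; exact absurd h1 (by decide))

lemma shapeL_two {w o : List Ltr} (h : ShapeL (2 :: w) o) : ∃ t, o = 2 :: t := by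
  rcases h with ⟨h, _⟩ | ⟨_, h⟩ | ⟨⟨w', h⟩, _⟩ | ⟨h, _⟩ | ⟨⟨w', h⟩, _⟩ | ⟨⟨w', h⟩, _⟩
  · simp at h
  · exact h
  all_goals (injection h with h1 _; exact absurd h1 (by decide))

lemma shapeL_one {w o : List Ltr} (h : ShapeL (1 :: w) o) : ∃ t, o = 1 :: 0 :: t := by
  rcases h with ⟨h, _⟩ | ⟨⟨w', h⟩, _⟩ | ⟨_, h⟩ | ⟨h, _⟩ | ⟨⟨w', h⟩, _⟩ | ⟨⟨w', h⟩, _⟩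
  · simp at h
  · injection h with h1 _; exact absurd h1 (by decide)
  · exact h
  all_goals (injection h with h1 _; exact absurd h1 (by decide))

end Wrd

namespace Wrd

lemma ltr_cases (a : Ltr) : a = 0 ∨ a = 1 ∨ a = 2 := by
  fin_cases a <;> simp

lemma SR : ∀ (k : ℕ) (v : List Ltr), v.length ≤ k → v.Chain' (· ≠ ·) →
    ShapeR v (red (subR v)) := by
  intro k
  induction k with
  | zero =>
    intro v hv _
    have : v = [] := List.length_eq_zero_iff.1 (Nat.le_zero.1 hv)
    subst this
    exact Or.inl ⟨rfl, rfl⟩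
  | succ k ih =>
    intro v hv hc
    match v with
    | [] => exact Or.inl ⟨rfl, rfl⟩
    | a :: w =>
      have hwlen : w.length ≤ k := by simpa using hv
      have hw : ShapeR w (red (subR w)) := ih w hwlen hc.tail
      have hred : red (subR (a :: w)) = (rimg a).foldr step (red (subR w)) := by
        rw [subR_cons, red_append]
      rcases ltr_cases a with rfl | rfl | rfl
      · -- a = 0
        refine Or.inr (Or.inl ⟨⟨w, rfl⟩, ?_⟩)
        rw [hred]
        rcases hw with ⟨hw1, hw2⟩ | ⟨⟨w', hw1⟩, ⟨t, hw2⟩⟩ | ⟨⟨w', hw1⟩, ⟨t, hw2⟩⟩ |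
          ⟨hw1, hw2⟩ | ⟨⟨w', hw1⟩, ⟨t, hw2⟩⟩ | ⟨⟨w', hw1⟩, ⟨t, hw2⟩⟩ <;> rw [hw2]
        · exact ⟨[], rfl⟩
        · subst hw1; exact absurd rfl (List.isChain_cons_cons.1 hc).1
        · exact ⟨1 :: 2 :: t, by simp [rimg, step]⟩
        · exact ⟨[1], by simp [rimg, step]⟩
        · exact ⟨1 :: 0 :: t, by simp [rimg, step]⟩
        · exact ⟨2 :: t, by simp [rimg, step]⟩
      · -- a = 1
        refine Or.inr (Or.inr (Or.inl ⟨⟨w, rfl⟩, ?_⟩))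
        rw [hred]
        rcases hw with ⟨hw1, hw2⟩ | ⟨⟨w', hw1⟩, ⟨t, hw2⟩⟩ | ⟨⟨w', hw1⟩, ⟨t, hw2⟩⟩ |
          ⟨hw1, hw2⟩ | ⟨⟨w', hw1⟩, ⟨t, hw2⟩⟩ | ⟨⟨w', hw1⟩, ⟨t, hw2⟩⟩ <;> rw [hw2]
        · exact ⟨[1], by simp [rimg, step]⟩
        · exact ⟨1 :: 0 :: t, by simp [rimg, step]⟩
        · subst hw1; exact absurd rfl (List.isChain_cons_cons.1 hc).1
        · exact ⟨[], by simp [rimg, step]⟩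
        · exact ⟨0 :: t, by simp [rimg, step]⟩
        · exact ⟨1 :: 2 :: t, by simp [rimg, step]⟩
      · -- a = 2
        match w with
        | [] =>
          refine Or.inr (Or.inr (Or.inr (Or.inl ⟨rfl, ?_⟩)))
          rw [hred]
          simp [rimg, step, subR, red]
        | b :: w' =>
          have hb : (2 : Ltr) ≠ b := (List.isChain_cons_cons.1 hc).1
          have hlen' : (b :: w').length ≤ k := by simpa using hv
          rcases ltr_cases b with rfl | rfl | rfl
          · refine Or.inr (Or.inr (Or.inr (Or.inr (Or.inl ⟨⟨w', rfl⟩, ?_⟩))))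
            obtain ⟨t, ht⟩ := shapeR_zero (ih (0 :: w') hlen' hc.tail)
            rw [hred, ht]
            exact ⟨t, by simp [rimg, step]⟩
          · refine Or.inr (Or.inr (Or.inr (Or.inr (Or.inr ⟨⟨w', rfl⟩, ?_⟩))))
            obtain ⟨t, ht⟩ := shapeR_one (ih (1 :: w') hlen' hc.tail)
            rw [hred, ht]
            exact ⟨t, by simp [rimg, step]⟩
          · exact absurd rfl hb

end Wrd

namespace Wrd

lemma SL : ∀ (k : ℕ) (v : List Ltr), v.length ≤ k → v.Chain' (· ≠ ·) →
    ShapeL v (red (subL v)) := by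
  intro k
  induction k with
  | zero =>
    intro v hv _
    have : v = [] := List.length_eq_zero_iff.1 (Nat.le_zero.1 hv)
    subst this
    exact Or.inl ⟨rfl, rfl⟩
  | succ k ih =>
    intro v hv hc
    match v with
    | [] => exact Or.inl ⟨rfl, rfl⟩
    | a :: w =>
      have hwlen : w.length ≤ k := by simpa using hv
      have hw : ShapeL w (red (subL w)) := ih w hwlen hc.tail
      have hred : red (subL (a :: w)) = (limg a).foldr step (red (subL w)) := by
        rw [subL_cons, red_append]
      rcases ltr_cases a with rfl | rfl | rfl
      · -- a = 0
        match w with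
        | [] =>
          refine Or.inr (Or.inr (Or.inr (Or.inl ⟨rfl, ?_⟩)))
          rw [hred]
          simp [limg, step, subL, red]
        | b :: w' =>
          have hb : (0 : Ltr) ≠ b := (List.isChain_cons_cons.1 hc).1
          have hlen' : (b :: w').length ≤ k := by simpa using hv
          rcases ltr_cases b with rfl | rfl | rfl
          · exact absurd rfl hb
          · refine Or.inr (Or.inr (Or.inr (Or.inr (Or.inr ⟨⟨w', rfl⟩, ?_⟩))))
            obtain ⟨t, ht⟩ := shapeL_one (ih (1 :: w') hlen' hc.tail)
            rw [hred, ht]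
            exact ⟨t, by simp [limg, step]⟩
          · refine Or.inr (Or.inr (Or.inr (Or.inr (Or.inl ⟨⟨w', rfl⟩, ?_⟩))))
            obtain ⟨t, ht⟩ := shapeL_two (ih (2 :: w') hlen' hc.tail)
            rw [hred, ht]
            exact ⟨t, by simp [limg, step]⟩
      · -- a = 1
        refine Or.inr (Or.inr (Or.inl ⟨⟨w, rfl⟩, ?_⟩))
        rw [hred]
        rcases hw with ⟨hw1, hw2⟩ | ⟨⟨w', hw1⟩, ⟨t, hw2⟩⟩ | ⟨⟨w', hw1⟩, ⟨t, hw2⟩⟩ |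
          ⟨hw1, hw2⟩ | ⟨⟨w', hw1⟩, ⟨t, hw2⟩⟩ | ⟨⟨w', hw1⟩, ⟨t, hw2⟩⟩ <;> rw [hw2]
        · exact ⟨[1], by simp [limg, step]⟩
        · exact ⟨1 :: 2 :: t, by simp [limg, step]⟩
        · subst hw1; exact absurd rfl (List.isChain_cons_cons.1 hc).1
        · exact ⟨[], by simp [limg, step]⟩
        · exact ⟨2 :: t, by simp [limg, step]⟩
        · exact ⟨1 :: 0 :: t, by simp [limg, step]⟩
      · -- a = 2
        refine Or.inr (Or.inl ⟨⟨w, rfl⟩, ?_⟩)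
        rw [hred]
        rcases hw with ⟨hw1, hw2⟩ | ⟨⟨w', hw1⟩, ⟨t, hw2⟩⟩ | ⟨⟨w', hw1⟩, ⟨t, hw2⟩⟩ |
          ⟨hw1, hw2⟩ | ⟨⟨w', hw1⟩, ⟨t, hw2⟩⟩ | ⟨⟨w', hw1⟩, ⟨t, hw2⟩⟩ <;> rw [hw2]
        · exact ⟨[], rfl⟩
        · subst hw1; exact absurd rfl (List.isChain_cons_cons.1 hc).1
        · exact ⟨1 :: 0 :: t, by simp [limg, step]⟩
        · exact ⟨[1], by simp [limg, step]⟩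
        · exact ⟨1 :: 2 :: t, by simp [limg, step]⟩
        · exact ⟨0 :: t, by simp [limg, step]⟩

end Wrd

namespace Wrd

lemma ofA : of 0 = A := rfl
lemma ofB : of 1 = B := rfl
lemma ofC : of 2 = C := rfl

def chainb : List Ltr → Bool
  | [] => true
  | [_] => true
  | a :: b :: t => decide (a ≠ b) && chainb (b :: t)

lemma chain'_of_chainb : ∀ l : List Ltr, chainb l = true → l.Chain' (· ≠ ·) := by
  intro l
  induction l with
  | nil => intro _; simp [List.Chain']
  | cons a t ih =>
    intro h
    cases t with
    | nil => simp [List.Chain']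
    | cons b t' =>
      rw [chainb, Bool.and_eq_true, decide_eq_true_eq] at h
      exact List.isChain_cons_cons.2 ⟨h.1, ih h.2⟩

lemma Ainv : A⁻¹ = A := of_inv 0
lemma Binv : B⁻¹ = B := of_inv 1
lemma Cinv : C⁻¹ = C := of_inv 2

lemma D_eq : D = prodG [2, 1, 0] := by
  show C * B * A = _
  rw [← ofA, ← ofB, ← ofC]
  simp [prodG, mul_assoc]

lemma Dinv_eq : D⁻¹ = prodG [0, 1, 2] := by
  rw [D_eq]
  rw [show (prodG [2,1,0])⁻¹ = (of 0)⁻¹ * ((of 1)⁻¹ * ((of 2)⁻¹ * 1)) by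
    simp [prodG, mul_assoc]]
  simp [of_inv, prodG, mul_assoc]

section Auts

variable (R L : MulAut G)
  (hRA : R A = A) (hRB : R B = B * C * B⁻¹) (hRC : R C = B)
  (hLA : L A = B) (hLB : L B = B * A * B⁻¹) (hLC : L C = C)

include hRA hRB hRC in
lemma mapR : ∀ l : List Ltr, R (prodG l) = prodG (subR l) := by
  intro l
  induction l with
  | nil => simp [subR]
  | cons a t ih =>
    rw [prodG_cons, map_mul, ih, subR_cons, prodG_append]
    congr 1
    rcases ltr_cases a with rfl | rfl | rfl
    · rw [ofA, hRA]; simp [rimg, prodG, ofA]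
    · rw [ofB, hRB, Binv]; simp [rimg, prodG, ofB, ofC, mul_assoc]
    · rw [ofC, hRC]; simp [rimg, prodG, ofB]

include hLA hLB hLC in
lemma mapL : ∀ l : List Ltr, L (prodG l) = prodG (subL l) := by
  intro l
  induction l with
  | nil => simp [subL]
  | cons a t ih =>
    rw [prodG_cons, map_mul, ih, subL_cons, prodG_append]
    congr 1
    rcases ltr_cases a with rfl | rfl | rfl
    · rw [ofA, hLA]; simp [limg, prodG, ofB]
    · rw [ofB, hLB, Binv]; simp [limg, prodG, ofA, ofB, mul_assoc]
    · rw [ofC, hLC]; simp [limg, prodG, ofC]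

def Sword (x : G) : Prop :=
  ∃ a t, ((1 : Ltr) :: a :: t).Chain' (· ≠ ·) ∧ x = prodG (1 :: a :: t)

include hRA hRB hRC in
lemma Sword_R {x : G} (h : Sword x) : Sword (R x) := by
  obtain ⟨a, t, hc, rfl⟩ := h
  rw [mapR R hRA hRB hRC]
  obtain ⟨t', ht'⟩ := shapeR_one (SR (1 :: a :: t).length _ le_rfl hc)
  refine ⟨2, t', ?_, ?_⟩
  · rw [← ht']; exact chain'_red _
  · rw [← prodG_red (subR (1 :: a :: t)), ht']

include hLA hLB hLC in
lemma Sword_L {x : G} (h : Sword x) : Sword (L x) := by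
  obtain ⟨a, t, hc, rfl⟩ := h
  rw [mapL L hLA hLB hLC]
  obtain ⟨t', ht'⟩ := shapeL_one (SL (1 :: a :: t).length _ le_rfl hc)
  refine ⟨0, t', ?_, ?_⟩
  · rw [← ht']; exact chain'_red _
  · rw [← prodG_red (subL (1 :: a :: t)), ht']

def OG (x : G) : Prop := (∃ i, x = of i) ∨ Sword x

include hRA hRB hRC in
lemma OG_R {x : G} (h : OG x) : OG (R x) := by
  rcases h with ⟨i, rfl⟩ | h
  · rcases ltr_cases i with rfl | rfl | rfl
    · exact Or.inl ⟨0, by rw [ofA, hRA]⟩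
    · refine Or.inr ⟨2, [1], chain'_of_chainb _ rfl, ?_⟩
      rw [ofB, hRB, Binv]
      simp [prodG, ofB, ofC, mul_assoc]
    · exact Or.inl ⟨1, by rw [ofC, hRC, ofB]⟩
  · exact Or.inr (Sword_R R hRA hRB hRC h)

include hLA hLB hLC in
lemma OG_L {x : G} (h : OG x) : OG (L x) := by
  rcases h with ⟨i, rfl⟩ | h
  · rcases ltr_cases i with rfl | rfl | rfl
    · exact Or.inl ⟨1, by rw [ofA, hLA, ofB]⟩
    · refine Or.inr ⟨0, [1], chain'_of_chainb _ rfl, ?_⟩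
      rw [ofB, hLB, Binv]
      simp [prodG, ofA, ofB, mul_assoc]
    · exact Or.inl ⟨2, by rw [ofC, hLC]⟩
  · exact Or.inr (Sword_L L hLA hLB hLC h)

end Auts

end Wrd

namespace Wrd

lemma conjD (k : ℕ) (c : List Ltr) (hc : c.Chain' (· ≠ ·)) (h2 : c.head? = some 2)
    (hl : c.getLast? = some 2) :
    ∃ w : List Ltr, w.Chain' (· ≠ ·) ∧ w.head? = some 2 ∧ w.getLast? = some 2 ∧
      c.length ≤ w.length ∧ D ^ k * prodG c * (D ^ k)⁻¹ = prodG w := by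
  induction k with
  | zero => exact ⟨c, hc, h2, hl, le_rfl, by simp⟩
  | succ k ih =>
    obtain ⟨w, hw, hw2, hwl, hlen, heq⟩ := ih
    refine ⟨[2, 1, 0] ++ w ++ [0, 1, 2], ?_, ?_, ?_, ?_, ?_⟩
    · apply List.IsChain.append
      · apply List.IsChain.append (chain'_of_chainb [2,1,0] rfl) hw
        intro x hx y hy
        rw [hw2] at hy
        simp at hx hy
        subst hx; subst hy
        decide
      · exact chain'_of_chainb [0,1,2] rfl
      · intro x hx y hy
        rw [List.getLast?_append_of_ne_nil] at hx
        · rw [hwl] at hx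
          simp at hx hy
          subst hx; subst hy
          decide
        · cases w with
          | nil => simp at hw2
          | cons a t => simp
    · cases w with
      | nil => simp at hw2
      | cons a t => rfl
    · rw [List.getLast?_append_of_ne_nil]
      · rfl
      · simp
    · simp; omega
    · have : D ^ (k + 1) = D * D ^ k := by rw [pow_succ']
      rw [this, mul_inv_rev, prodG_append, prodG_append, ← D_eq]
      have hDi : prodG [0,1,2] = D⁻¹ := Dinv_eq.symm
      rw [hDi, ← heq]
      group

lemma conjD' (k : ℕ) (c : List Ltr) (hc : c.Chain' (· ≠ ·)) (h2 : c.head? = some 0)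
    (hl : c.getLast? = some 0) :
    ∃ w : List Ltr, w.Chain' (· ≠ ·) ∧ w.head? = some 0 ∧ w.getLast? = some 0 ∧
      c.length ≤ w.length ∧ (D⁻¹) ^ k * prodG c * ((D⁻¹) ^ k)⁻¹ = prodG w := by
  induction k with
  | zero => exact ⟨c, hc, h2, hl, le_rfl, by simp⟩
  | succ k ih =>
    obtain ⟨w, hw, hw2, hwl, hlen, heq⟩ := ih
    refine ⟨[0, 1, 2] ++ w ++ [2, 1, 0], ?_, ?_, ?_, ?_, ?_⟩
    · apply List.IsChain.append
      · apply List.IsChain.append (chain'_of_chainb [0,1,2] rfl) hw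
        intro x hx y hy
        rw [hw2] at hy
        simp at hx hy
        subst hx; subst hy
        decide
      · exact chain'_of_chainb [2,1,0] rfl
      · intro x hx y hy
        rw [List.getLast?_append_of_ne_nil] at hx
        · rw [hwl] at hx
          simp at hx hy
          subst hx; subst hy
          decide
        · cases w with
          | nil => simp at hw2
          | cons a t => simp
    · cases w with
      | nil => simp at hw2
      | cons a t => rfl
    · rw [List.getLast?_append_of_ne_nil]
      · rfl
      · simp
    · simp; omega
    · have : (D⁻¹) ^ (k + 1) = D⁻¹ * (D⁻¹) ^ k := by rw [pow_succ']
      rw [this, mul_inv_rev, prodG_append, prodG_append, ← Dinv_eq]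
      have hDd : prodG [2,1,0] = D := D_eq.symm
      rw [hDd, ← heq]
      group

end Wrd

namespace Wrd

lemma conj_one (x : G) (hx : ∃ c, x = prodG c) :
    True := trivial

lemma conj_pos (X : Ltr) : D * of X * D⁻¹ = prodG ([2,1,0] ++ [X] ++ [0,1,2]) := by
  rw [prodG_append, prodG_append, ← D_eq, ← Dinv_eq]
  simp [prodG]

lemma conj_neg (X : Ltr) : D⁻¹ * of X * D = prodG ([0,1,2] ++ [X] ++ [2,1,0]) := by
  rw [prodG_append, prodG_append, ← D_eq, ← Dinv_eq]
  simp [prodG]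

lemma Pword (k : ℤ) (X : Ltr) :
    ∃ w : List Ltr, w.Chain' (· ≠ ·) ∧ D ^ k * of X * (D ^ k)⁻¹ = prodG w ∧
      ((k = 0 ∧ w = [X]) ∨ (3 ≤ w.length ∧ (w.head? = some 2 ∨ w.head? = some 0))) := by
  rcases k with n | n
  · cases n with
    | zero =>
      refine ⟨[X], chain'_of_chainb _ rfl, ?_, Or.inl ⟨rfl, rfl⟩⟩
      show D ^ (0 : ℤ) * of X * (D ^ (0 : ℤ))⁻¹ = _
      simp [prodG]
    | succ j =>
      have hcore : ∃ c : List Ltr, c.Chain' (· ≠ ·) ∧ c.head? = some 2 ∧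
          c.getLast? = some 2 ∧ 3 ≤ c.length ∧ D * of X * D⁻¹ = prodG c := by
        rcases ltr_cases X with rfl | rfl | rfl
        · exact ⟨[2,1,0,1,2], chain'_of_chainb _ rfl, rfl, by decide, by decide,
            by rw [conj_pos]; exact prodG_eq_iff.2 (by decide)⟩
        · exact ⟨[2,1,0,1,0,1,2], chain'_of_chainb _ rfl, rfl, by decide, by decide,
            by rw [conj_pos]; exact prodG_eq_iff.2 (by decide)⟩
        · exact ⟨[2,1,0,2,0,1,2], chain'_of_chainb _ rfl, rfl, by decide, by decide,
            by rw [conj_pos]; exact prodG_eq_iff.2 (by decide)⟩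
      obtain ⟨c, hc, hch, hcl, hclen, hceq⟩ := hcore
      obtain ⟨w, hw, hwh, hwl, hwlen, hweq⟩ := conjD j c hc hch hcl
      refine ⟨w, hw, ?_, Or.inr ⟨by omega, Or.inl hwh⟩⟩
      have h1 : (D : G) ^ (Int.ofNat (j + 1)) = D ^ (j + 1 : ℕ) := zpow_natCast D (j+1)
      rw [h1, pow_succ]
      rw [← hweq, ← hceq]
      group
  · have hcore : ∃ c : List Ltr, c.Chain' (· ≠ ·) ∧ c.head? = some 0 ∧
        c.getLast? = some 0 ∧ 3 ≤ c.length ∧ D⁻¹ * of X * D = prodG c := by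
      rcases ltr_cases X with rfl | rfl | rfl
      · exact ⟨[0,1,2,0,2,1,0], chain'_of_chainb _ rfl, rfl, by decide, by decide,
          by rw [conj_neg]; exact prodG_eq_iff.2 (by decide)⟩
      · exact ⟨[0,1,2,1,2,1,0], chain'_of_chainb _ rfl, rfl, by decide, by decide,
          by rw [conj_neg]; exact prodG_eq_iff.2 (by decide)⟩
      · exact ⟨[0,1,2,1,0], chain'_of_chainb _ rfl, rfl, by decide, by decide,
          by rw [conj_neg]; exact prodG_eq_iff.2 (by decide)⟩
    obtain ⟨c, hc, hch, hcl, hclen, hceq⟩ := hcore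
    obtain ⟨w, hw, hwh, hwl, hwlen, hweq⟩ := conjD' n c hc hch hcl
    refine ⟨w, hw, ?_, Or.inr ⟨by omega, Or.inr hwh⟩⟩
    have h1 : (D : G) ^ (Int.negSucc n) = (D⁻¹) ^ (n + 1 : ℕ) := by
      rw [zpow_negSucc, inv_pow]
    rw [h1, pow_succ]
    rw [← hweq, ← hceq]
    group

lemma ABAword (k : ℤ) :
    ∃ w : List Ltr, w.Chain' (· ≠ ·) ∧ D ^ k * (A * B * A) * (D ^ k)⁻¹ = prodG w ∧
      3 ≤ w.length ∧ (w.head? = some 2 ∨ w.head? = some 0) := by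
  have hABA : A * B * A = prodG [0, 1, 0] := by
    rw [← ofA, ← ofB]
    simp [prodG, mul_assoc]
  rcases k with n | n
  · cases n with
    | zero =>
      refine ⟨[0,1,0], chain'_of_chainb _ rfl, ?_, by decide, Or.inr rfl⟩
      show D ^ (0 : ℤ) * (A * B * A) * (D ^ (0 : ℤ))⁻¹ = _
      simpa using hABA
    | succ j =>
      have hcbc : D * (A * B * A) * D⁻¹ = prodG [2, 1, 2] := by
        rw [hABA, show (prodG [0,1,0] : G) = of 0 * of 1 * of 0 by simp [prodG, mul_assoc]]
        rw [show D * (of 0 * of 1 * of 0) * D⁻¹ =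
          D * of 0 * D⁻¹ * (D * of 1 * D⁻¹) * (D * of 0 * D⁻¹) by group]
        rw [conj_pos, conj_pos, ← prodG_append, ← prodG_append]
        exact prodG_eq_iff.2 (by decide)
      obtain ⟨w, hw, hwh, hwl, hwlen, hweq⟩ :=
        conjD j [2,1,2] (chain'_of_chainb _ rfl) rfl (by decide)
      refine ⟨w, hw, ?_, by simp at hwlen; omega, Or.inl hwh⟩
      have h1 : (D : G) ^ (Int.ofNat (j + 1)) = D ^ (j + 1 : ℕ) := zpow_natCast D (j+1)
      rw [h1, pow_succ, ← hweq, ← hcbc]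
      group
  · have hcore : D⁻¹ * (A * B * A) * D = prodG [0,1,2,0,1,0,2,1,0] := by
      rw [hABA, show (prodG [0,1,0] : G) = of 0 * of 1 * of 0 by simp [prodG, mul_assoc]]
      rw [show D⁻¹ * (of 0 * of 1 * of 0) * D =
        D⁻¹ * of 0 * D * (D⁻¹ * of 1 * D) * (D⁻¹ * of 0 * D) by group]
      rw [conj_neg, conj_neg, ← prodG_append, ← prodG_append]
      exact prodG_eq_iff.2 (by decide)
    obtain ⟨w, hw, hwh, hwl, hwlen, hweq⟩ :=
      conjD' n [0,1,2,0,1,0,2,1,0] (chain'_of_chainb _ rfl) rfl (by decide)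
    refine ⟨w, hw, ?_, by simp at hwlen; omega, Or.inr hwh⟩
    have h1 : (D : G) ^ (Int.negSucc n) = (D⁻¹) ^ (n + 1 : ℕ) := by
      rw [zpow_negSucc, inv_pow]
    rw [h1, pow_succ, ← hweq, ← hcore]
    group

lemma Pinj {q k : ℤ} {X Y : Ltr}
    (h : D ^ q * of X * (D ^ q)⁻¹ = D ^ k * of Y * (D ^ k)⁻¹) : q = k ∧ X = Y := by
  have e : of X = D ^ (k - q) * of Y * (D ^ (k - q))⁻¹ := by
    have e1 : (D ^ q)⁻¹ * (D ^ q * of X * (D ^ q)⁻¹) * D ^ q = of X := by group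
    have e2 : (D ^ q)⁻¹ * (D ^ k * of Y * (D ^ k)⁻¹) * D ^ q
        = D ^ (k - q) * of Y * (D ^ (k - q))⁻¹ := by
      rw [show (D:G) ^ k = D ^ q * D ^ (k - q) by rw [← zpow_add]; ring_nf]
      group
    rw [← e1, h, e2]
  obtain ⟨w, hcw, heq, hbr⟩ := Pword (k - q) Y
  have hw : [X] = w := prodG_chain_inj (chain'_of_chainb _ rfl)
    hcw (by rw [← heq, ← e]; simp [prodG])
  rcases hbr with ⟨hk, hwY⟩ | ⟨hlen, _⟩
  · rw [hwY] at hw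
    injection hw with h1 _
    exact ⟨by omega, h1⟩
  · rw [← hw] at hlen
    simp at hlen

lemma PnotS {z : G} {k : ℤ} {X : Ltr} (hs : Sword z) :
    z ≠ D ^ k * of X * (D ^ k)⁻¹ := by
  intro h
  obtain ⟨a, t, hc, rfl⟩ := hs
  obtain ⟨w, hcw, heq, hbr⟩ := Pword k X
  have hw : (1 :: a :: t : List Ltr) = w := prodG_chain_inj hc hcw (h.trans heq)
  rcases hbr with ⟨_, hwY⟩ | ⟨_, hhd⟩
  · rw [hwY] at hw
    injection hw with _ h2
    simp at h2
  · rw [← hw] at hhd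
    rcases hhd with h' | h' <;> simp at h' <;> exact absurd h' (by decide)

lemma OnotABA {z : G} {k : ℤ} (ho : OG z) :
    z ≠ D ^ k * (A * B * A) * (D ^ k)⁻¹ := by
  intro h
  obtain ⟨w, hcw, heq, hlen, hhd⟩ := ABAword k
  rcases ho with ⟨i, rfl⟩ | ⟨a, t, hc, rfl⟩
  · have hw : ([i] : List Ltr) = w := prodG_chain_inj (chain'_of_chainb _ rfl)
      hcw (by rw [← heq, ← h]; simp [prodG])
    rw [← hw] at hlen
    simp at hlen
  · have hw : (1 :: a :: t : List Ltr) = w := prodG_chain_inj hc hcw (h.trans heq)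
    rw [← hw] at hhd
    rcases hhd with h' | h' <;> simp at h' <;> exact absurd h' (by decide)

end Wrd


/-- If f_n = L then P_{2m,n} = P_{2m−1,n₊}, and Q_{m',n'} equals this element exactly
for (m',n') in {(3m+1,n)} ∪ {(3m,k) | n+1 ≤ k ≤ n₊}. -/
theorem stmt16
    (R L : MulAut G)
    (hRA : R A = A) (hRB : R B = B * C * B⁻¹) (hRC : R C = B)
    (hLA : L A = B) (hLB : L B = B * A * B⁻¹) (hLC : L C = C)
    (P : ℤ → G)
    (hP0 : ∀ m : ℤ, P (3 * m) = D ^ m * A * (D ^ m)⁻¹)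
    (hP1 : ∀ m : ℤ, P (3 * m + 1) = D ^ m * B * (D ^ m)⁻¹)
    (hP2 : ∀ m : ℤ, P (3 * m + 2) = D ^ m * C * (D ^ m)⁻¹)
    (p : ℤ) (hp : 2 ≤ p)
    (f : ℤ → MulAut G) (hfRL : ∀ n : ℤ, f n = R ∨ f n = L)
    (hfper : ∀ n : ℤ, f (n + p) = f n) (hf0 : f 0 = L) (hf1 : f 1 = R)
    (F : ℤ → MulAut G) (hF0 : F 0 = 1) (hF : ∀ n : ℤ, F n = F (n - 1) * f n)
    (Q : ℤ → ℤ → G) (hQ : ∀ m n : ℤ, Q m n = F (n - 1) (P m))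
    (PP : ℤ → ℤ → G)
    (hPPe : ∀ m n : ℤ, PP (2 * m) n = D ^ m * F (n - 1) B * (D ^ m)⁻¹)
    (hPPo : ∀ m n : ℤ, PP (2 * m + 1) n = D ^ m * F n (C * B * C⁻¹) * (D ^ m)⁻¹)
    (np : ℤ → ℤ) (hnp : ∀ n : ℤ, IsLeast {k : ℤ | n < k ∧ f k = f n} (np n)) :
    ∀ m n : ℤ, f n = L →
      PP (2 * m) n = PP (2 * m - 1) (np n) ∧
      ∀ m' n' : ℤ, Q m' n' = PP (2 * m) n ↔
        ((m' = 3 * m + 1 ∧ n' = n) ∨ (m' = 3 * m ∧ n + 1 ≤ n' ∧ n' ≤ np n)) := by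
  intro m n hfn
  obtain ⟨⟨hnN, hfN⟩, hlb⟩ := hnp n
  set N := np n with hNdef
  have hfNL : f N = L := by rw [hfN, hfn]
  have fR : ∀ k : ℤ, n < k → k < N → f k = R := by
    intro k h1 h2
    rcases hfRL k with h | h
    · exact h
    · exact absurd (hlb ⟨h1, by rw [h, hfn]⟩) (by omega)
  have hRD : R D = D := by
    rw [Wrd.D_eq, Wrd.mapR R hRA hRB hRC]
    exact Wrd.prodG_eq_iff.2 (by decide)
  have hLD : L D = D := by
    rw [Wrd.D_eq, Wrd.mapL L hLA hLB hLC]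
    exact Wrd.prodG_eq_iff.2 (by decide)
  have fD : ∀ k : ℤ, f k D = D := by
    intro k
    rcases hfRL k with h | h <;> rw [h] <;> assumption
  have hFstep : ∀ (k : ℤ) (x : G), F k x = F (k - 1) (f k x) := by
    intro k x
    conv_lhs => rw [hF k]
    rfl
  have FD : ∀ k : ℤ, F k D = D := by
    intro k
    induction k using Int.induction_on with
    | zero => rw [hF0]; rfl
    | succ i ih =>
      rw [hFstep (i+1) D, fD, show (i + 1 - 1 : ℤ) = i by ring]
      exact ih
    | pred i ih =>
      have h2 := hFstep (-i) D
      rw [fD] at h2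
      rw [← h2]
      exact ih
  have Fconj : ∀ (k q : ℤ) (x : G), F k (D^q * x * (D^q)⁻¹) = D^q * F k x * (D^q)⁻¹ := by
    intro k q x
    rw [map_mul, map_mul, map_inv, map_zpow, FD]
  have fconj : ∀ (k q : ℤ) (x : G), f k (D^q * x * (D^q)⁻¹) = D^q * f k x * (D^q)⁻¹ := by
    intro k q x
    rw [map_mul, map_mul, map_inv, map_zpow, fD]
  have conj_extract : ∀ (q k : ℤ) (x y : G),
      D^q * x * (D^q)⁻¹ = D^k * y * (D^k)⁻¹ → x = D^(k-q) * y * (D^(k-q))⁻¹ := by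
    intro q k x y h
    have e1 : (D^q)⁻¹ * (D^q * x * (D^q)⁻¹) * D^q = x := by group
    have e2 : (D^q)⁻¹ * (D^k * y * (D^k)⁻¹) * D^q = D^(k-q) * y * (D^(k-q))⁻¹ := by
      rw [show (D:G)^k = D^q * D^(k-q) by rw [← zpow_add]; ring_nf]
      group
    rw [← e1, h, e2]
  have hT : PP (2*m) n = F (n-1) (D^m * B * (D^m)⁻¹) := by
    rw [hPPe, Fconj]
  -- C1
  have C1' : ∀ j : ℕ, (n + j ≤ N - 1) →
      F (n + j) (D^m * A * (D^m)⁻¹) = F (n-1) (D^m * B * (D^m)⁻¹) := by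
    intro j
    induction j with
    | zero =>
      intro _
      rw [show (n + ((0:ℕ):ℤ)) = n by simp, hFstep n _, fconj, hfn, hLA]
    | succ j ih =>
      intro hj
      have hidx : (n + ((j+1:ℕ):ℤ)) = (n + j) + 1 := by push_cast; ring
      rw [hidx, hFstep ((n+j)+1) _, show ((n+(j:ℤ))+1-1) = n + j by ring]
      have hfR : f ((n+j)+1) = R := fR _ (by omega) (by push_cast at hj ⊢; omega)
      rw [fconj, hfR, hRA]
      exact ih (by push_cast at hj ⊢; omega)
  have C1 : ∀ k : ℤ, n ≤ k → k ≤ N - 1 →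
      F k (D^m * A * (D^m)⁻¹) = F (n-1) (D^m * B * (D^m)⁻¹) := by
    intro k h1 h2
    have h3 := C1' (k - n).toNat (by omega)
    rwa [show (n + (((k-n).toNat:ℕ):ℤ)) = k by omega] at h3
  -- L (A*B*A) = A
  have hBB : B * B = 1 := Wrd.of_sq 1
  have hLABA : L (A * B * A) = A := by
    rw [map_mul, map_mul, hLA, hLB, Wrd.Binv]
    calc B * (B * A * B) * B = (B*B) * A * (B*B) := by group
    _ = A := by rw [hBB]; group
  have TN : F (n-1) (D^m * B * (D^m)⁻¹) = F N (D^m * (A*B*A) * (D^m)⁻¹) := by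
    rw [hFstep N _, fconj, hfNL, hLABA]
    exact (C1 (N-1) (by omega) (by omega)).symm
  -- part 1
  have hE : C * (B * A * B⁻¹) * C⁻¹ = Wrd.prodG [2,1,0,1,2] := by
    rw [Wrd.Binv, Wrd.Cinv, ← Wrd.ofA, ← Wrd.ofB, ← Wrd.ofC]
    simp [Wrd.prodG, mul_assoc]
  have hRE : R (Wrd.prodG [2,1,0,1,2]) = Wrd.prodG [2,1,0,1,2] := by
    rw [Wrd.mapR R hRA hRB hRC]
    exact Wrd.prodG_eq_iff.2 (by decide)
  have hLE : L (Wrd.prodG [2,1,0,1,2]) = D * B * D⁻¹ := by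
    rw [Wrd.mapL L hLA hLB hLC]
    have h1 : D * B * D⁻¹ = Wrd.prodG ([2,1,0] ++ [1] ++ [0,1,2]) := by
      rw [← Wrd.ofB]; exact Wrd.conj_pos 1
    rw [h1]
    exact Wrd.prodG_eq_iff.2 (by decide)
  have chainE : ∀ j : ℕ, (n + j ≤ N - 1) →
      F (n + j) (Wrd.prodG [2,1,0,1,2]) = F n (Wrd.prodG [2,1,0,1,2]) := by
    intro j
    induction j with
    | zero => intro _; rw [show (n + ((0:ℕ):ℤ)) = n by simp]
    | succ j ih =>
      intro hj
      have hidx : (n + ((j+1:ℕ):ℤ)) = (n + j) + 1 := by push_cast; ring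
      rw [hidx, hFstep ((n+j)+1) _, show ((n+(j:ℤ))+1-1) = n + j by ring]
      have hfR : f ((n+j)+1) = R := fR _ (by omega) (by push_cast at hj ⊢; omega)
      rw [hfR, hRE]
      exact ih (by push_cast at hj ⊢; omega)
  have hLCBC : L (C * B * C⁻¹) = Wrd.prodG [2,1,0,1,2] := by
    rw [map_mul, map_mul, map_inv, hLC, hLB]
    exact hE
  have FNC : F N (C * B * C⁻¹) = F (n-1) (D * B * D⁻¹) := by
    rw [hFstep N _, hfNL, hLCBC]
    have h2 := chainE (N-1-n).toNat (by omega)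
    rw [show (n + (((N-1-n).toNat:ℕ):ℤ)) = N - 1 by omega] at h2
    rw [h2, hFstep n _, hfn, hLE]
  have part1 : PP (2*m) n = PP (2*m-1) N := by
    have h1 : PP (2*m - 1) N = D^(m-1) * F N (C*B*C⁻¹) * (D^(m-1))⁻¹ := by
      have h2 := hPPo (m-1) N
      rw [show (2*(m-1)+1 : ℤ) = 2*m - 1 by ring] at h2
      exact h2
    rw [h1, FNC, hT, Fconj, map_mul, map_mul, map_inv, FD]
    rw [show (D:G)^m = D^(m-1) * D by rw [← zpow_add_one]; ring_nf]
    group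
  refine ⟨part1, ?_⟩
  -- decomposition of P
  have Pdec : ∀ m' : ℤ, ∃ (q : ℤ) (X : Fin 3),
      P m' = D^q * Wrd.of X * (D^q)⁻¹ ∧ m' = 3*q + (X.val : ℤ) := by
    intro m'
    have h3 : m' % 3 = 0 ∨ m' % 3 = 1 ∨ m' % 3 = 2 := by omega
    rcases h3 with h | h | h
    · refine ⟨m'/3, 0, ?_, by simp only [Fin.val_zero, Int.ofNat_zero]; omega⟩
      have h0 := hP0 (m'/3)
      rw [show (3*(m'/3) : ℤ) = m' by omega] at h0
      rw [h0, Wrd.ofA]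
    · refine ⟨m'/3, 1, ?_, by simp only [Fin.val_one]; omega⟩
      have h0 := hP1 (m'/3)
      rw [show (3*(m'/3) + 1 : ℤ) = m' by omega] at h0
      rw [h0, Wrd.ofB]
    · refine ⟨m'/3, 2, ?_, by simp only [Fin.val_two]; omega⟩
      have h0 := hP2 (m'/3)
      rw [show (3*(m'/3) + 2 : ℤ) = m' by omega] at h0
      rw [h0, Wrd.ofC]
  -- Sword chain downward (case n' < n)
  have Hu : ∀ j : ℕ, ∃ z : G, Wrd.Sword z ∧
      F (n-1) (D^m * B * (D^m)⁻¹) = F (n - 2 - j) (D^m * z * (D^m)⁻¹) := by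
    intro j
    induction j with
    | zero =>
      refine ⟨f (n-1) B, ?_, ?_⟩
      · rcases hfRL (n-1) with h | h <;> rw [h]
        · refine ⟨2, [1], Wrd.chain'_of_chainb _ rfl, ?_⟩
          rw [hRB, Wrd.Binv]
          simp [Wrd.prodG, Wrd.ofB, Wrd.ofC, mul_assoc]
        · refine ⟨0, [1], Wrd.chain'_of_chainb _ rfl, ?_⟩
          rw [hLB, Wrd.Binv]
          simp [Wrd.prodG, Wrd.ofA, Wrd.ofB, mul_assoc]
      · rw [hFstep (n-1) _, fconj, show (n-1-1 : ℤ) = n - 2 by ring,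
          show (n - 2 - ((0:ℕ):ℤ)) = n - 2 by simp]
    | succ j ih =>
      obtain ⟨z, hz, hTz⟩ := ih
      refine ⟨f (n-2-j) z, ?_, ?_⟩
      · rcases hfRL (n-2-j) with h | h <;> rw [h]
        · exact Wrd.Sword_R R hRA hRB hRC hz
        · exact Wrd.Sword_L L hLA hLB hLC hz
      · rw [hTz, hFstep (n-2-j) _, fconj,
          show (n-2-(j:ℤ)-1) = n - 2 - ((j+1:ℕ):ℤ) by push_cast; ring]
  -- upward no-return (case n' > N)
  have HW : ∀ j : ℕ, ∀ z : G, Wrd.OG z → ∀ q : ℤ,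
      F (N + j) (D^q * z * (D^q)⁻¹) = F (n-1) (D^m * B * (D^m)⁻¹) → False := by
    intro j
    induction j with
    | zero =>
      intro z hz q heq
      rw [show (N + ((0:ℕ):ℤ)) = N by simp, TN] at heq
      have h2 : D^q * z * (D^q)⁻¹ = D^m * (A*B*A) * (D^m)⁻¹ := (F N).injective heq
      exact Wrd.OnotABA hz (conj_extract q m z (A*B*A) h2)
    | succ j ih =>
      intro z hz q heq
      rw [show (N + ((j+1:ℕ):ℤ)) = (N+j)+1 by push_cast; ring,
        hFstep ((N+j)+1) _, show ((N+(j:ℤ))+1-1) = N + j by ring, fconj] at heq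
      refine ih (f ((N+(j:ℤ))+1) z) ?_ q heq
      rcases hfRL ((N+(j:ℤ))+1) with h | h <;> rw [h]
      · exact Wrd.OG_R R hRA hRB hRC hz
      · exact Wrd.OG_L L hLA hLB hLC hz
  intro m' n'
  constructor
  · intro h
    rw [hQ, hT] at h
    obtain ⟨q, X, hPm, hm'⟩ := Pdec m'
    rw [hPm] at h
    rcases (show n' ≤ n-1 ∨ n' = n ∨ (n+1 ≤ n' ∧ n' ≤ N) ∨ N+1 ≤ n' by omega)
      with hc | hc | hc | hc
    · exfalso
      obtain ⟨z, hz, hTz⟩ := Hu (n-1-n').toNat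
      rw [show (n - 2 - (((n-1-n').toNat:ℕ):ℤ)) = n' - 1 by omega] at hTz
      rw [hTz] at h
      have h2 := (F (n'-1)).injective h
      exact Wrd.PnotS hz (conj_extract m q z (Wrd.of X) h2.symm)
    · subst hc
      have h2 := (F (n'-1)).injective h
      rw [← Wrd.ofB] at h2
      obtain ⟨hqm, hX⟩ := Wrd.Pinj h2
      left
      refine ⟨?_, rfl⟩
      subst hX
      have : ((1 : Fin 3).val : ℤ) = 1 := rfl
      omega
    · have hk := C1 (n'-1) (by omega) (by omega)
      rw [← hk] at h
      have h2 := (F (n'-1)).injective h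
      rw [← Wrd.ofA] at h2
      obtain ⟨hqm, hX⟩ := Wrd.Pinj h2
      right
      refine ⟨?_, hc.1, hc.2⟩
      subst hX
      have : ((0 : Fin 3).val : ℤ) = 0 := rfl
      omega
    · exfalso
      apply HW (n'-1-N).toNat (Wrd.of X) (Or.inl ⟨X, rfl⟩) q
      rwa [show (N + (((n'-1-N).toNat:ℕ):ℤ)) = n' - 1 by omega]
  · intro h
    rcases h with ⟨h1, h2⟩ | ⟨h1, h2, h3⟩
    · subst h1; subst h2
      rw [hQ, hP1 m, hT]
    · subst h1
      rw [hQ, hP0 m, hT]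
      exact C1 (n'-1) (by omega) (by omega)
end

section
/- For (r,s), (r',s') ∈ ℤ², P_{r,s} = P_{r',s'} if and only if (r,s) = (r',s'), or the unordered pair {(r,s), (r',s')} equals {(2m,n), (2m+1,n₊)} for some m, n ∈ ℤ with f_n = R, or equals {(2m,n), (2m−1,n₊)} for some m, n ∈ ℤ with f_n = L. In other words, the identities P_{2m,n} = P_{2m+1,n₊} (when f_n = R) and P_{2m,n} = P_{2m−1,n₊} (when f_n = L) are the only coincidences among the elements P_{m,n}. -/
namespace Stmt17

abbrev V := Fin 3

/-- generator -/
def gen (v : V) : G := PresentedGroup.of v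

lemma gen_sq (v : V) : gen v * gen v = 1 := by
  have h : (FreeGroup.of v * FreeGroup.of v) ∈ rels := by
    fin_cases v
    · exact Set.mem_insert _ _
    · exact Set.mem_insert_of_mem _ (Set.mem_insert _ _)
    · exact Set.mem_insert_of_mem _ (Set.mem_insert_of_mem _ rfl)
  have : PresentedGroup.mk rels (FreeGroup.of v * FreeGroup.of v) = 1 := by
    apply (QuotientGroup.eq_one_iff _).2
    exact Subgroup.subset_normalClosure h
  simpa [gen, PresentedGroup.of, map_mul] using this

lemma gen_inv (v : V) : (gen v)⁻¹ = gen v := by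
  rw [inv_eq_iff_mul_eq_one, gen_sq]

/-- evaluation of a word -/
def eval (l : List V) : G := (l.map gen).prod

@[simp] lemma eval_nil : eval [] = 1 := rfl
@[simp] lemma eval_cons (v : V) (t : List V) : eval (v :: t) = gen v * eval t := by
  simp [eval]
@[simp] lemma eval_append (l l' : List V) : eval (l ++ l') = eval l * eval l' := by
  simp [eval]

/-- reduced words -/
abbrev Red (l : List V) : Prop := l.Chain' (· ≠ ·)

/-- prepend with cancellation -/
def pre (v : V) : List V → List V
  | [] => [v]
  | h :: t => if v = h then t else v :: h :: t

lemma red_pre {v : V} {l : List V} (h : Red l) : Red (pre v l) := by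
  cases l with
  | nil => simp [pre, Red, List.Chain']
  | cons h' t =>
    by_cases hv : v = h'
    · simp only [pre, if_pos hv]
      exact (List.isChain_cons.1 h).2
    · simp only [pre, if_neg hv]
      exact List.IsChain.cons_cons hv h

lemma pre_pre {v : V} {l : List V} (h : Red l) : pre v (pre v l) = l := by
  cases l with
  | nil => simp [pre]
  | cons h' t =>
    by_cases hv : v = h'
    · subst hv
      simp only [pre, if_pos rfl]
      cases t with
      | nil => simp [pre]
      | cons h'' t' =>
        have : v ≠ h'' := (List.isChain_cons_cons.1 h).1
        simp [pre, this]
    · simp [pre, hv]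

/-- The set of reduced words. -/
def S : Type := {l : List V // Red l}

def preS (v : V) : Equiv.Perm S where
  toFun := fun l => ⟨pre v l.1, red_pre l.2⟩
  invFun := fun l => ⟨pre v l.1, red_pre l.2⟩
  left_inv := fun l => Subtype.ext (pre_pre l.2)
  right_inv := fun l => Subtype.ext (pre_pre l.2)

lemma preS_sq (v : V) : preS v * preS v = 1 := by
  ext l
  rw [Equiv.Perm.mul_apply, Equiv.Perm.one_apply]
  exact Subtype.ext (pre_pre l.2)

/-- action of G on reduced words -/
def act : G →* Equiv.Perm S :=
  PresentedGroup.toGroup (f := preS) (by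
    intro r hr
    rcases hr with h | h | h <;> subst h <;>
      simpa [map_mul] using preS_sq _)

lemma act_gen (v : V) : act (gen v) = preS v := by
  simp [act, gen]

lemma act_eval (l : List V) (hl : Red l) :
    (act (eval l) ⟨[], List.isChain_nil⟩ : S).1 = l := by
  induction l with
  | nil => rfl
  | cons v t ih =>
    have ht : Red t := (List.isChain_cons.1 hl).2
    have ih' := ih ht
    rw [eval_cons, map_mul]
    have : (act (eval t) ⟨[], List.isChain_nil⟩ : S) = ⟨t, ht⟩ := Subtype.ext ih'
    show ((act (gen v)) ((act (eval t)) ⟨[], List.isChain_nil⟩)).1 = v :: t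
    rw [this, act_gen]
    show pre v t = v :: t
    cases t with
    | nil => rfl
    | cons h' t' =>
      have hv : v ≠ h' := (List.isChain_cons_cons.1 hl).1
      simp [pre, hv]

/-- eval is injective on reduced words -/
lemma eval_inj {l l' : List V} (h : Red l) (h' : Red l') (he : eval l = eval l') : l = l' := by
  have := act_eval l h
  rw [he, act_eval l' h'] at this
  exact this.symm

end Stmt17

namespace Stmt17

lemma fin3_cases (v : V) : v = 0 ∨ v = 1 ∨ v = 2 := by revert v; decide

lemma gen_mul_cancel (v : V) (x : G) : gen v * (gen v * x) = x := by
  rw [← mul_assoc, gen_sq, one_mul]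

/-- Interface of the word transformation. -/
structure RW (l l' : List V) : Prop where
  red : Red l'
  nil : l = [] ↔ l' = []
  h0 : l.head? = some 0 → l'.head? = some 0
  h1 : l.head? = some 1 → l'.head? = some 1
  hne : l.head? ≠ some 0 → l'.head? ≠ some 0
  h21 : ∀ u, l = 2 :: 1 :: u → l'.head? = some 2
  last1 : l.getLast? = some 1 → l'.getLast? = some 1
  one : l' = [1] → l = [2]

section RStep

variable {Raut : MulAut G}

lemma rstep (hR0 : Raut (gen 0) = gen 0) (hR1 : Raut (gen 1) = gen 1 * gen 2 * gen 1)
    (hR2 : Raut (gen 2) = gen 1) :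
    ∀ (N : ℕ) (l : List V), l.length ≤ N → Red l →
      ∃ l', RW l l' ∧ eval l' = Raut (eval l) := by
  intro N
  induction N with
  | zero =>
    intro l hl _
    have hnil : l = [] := List.eq_nil_of_length_eq_zero (Nat.le_zero.1 hl)
    subst hnil
    exact ⟨[], ⟨List.isChain_nil, by simp, by simp, by simp, by simp, by simp, by simp, by simp⟩,
      by simp⟩
  | succ N ih =>
    intro l hl hred
    rcases l with _ | ⟨v, t⟩
    · exact ⟨[], ⟨List.isChain_nil, by simp, by simp, by simp, by simp, by simp, by simp, by simp⟩,
        by simp⟩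
    have hlt : t.length ≤ N := by simpa using hl
    obtain hv | hv | hv := fin3_cases v
    · -- l = 0 :: t
      subst hv
      have hredt : Red t := (List.isChain_cons.1 hred).2
      obtain ⟨t', hi, he⟩ := ih t hlt hredt
      refine ⟨0 :: t', ⟨?_, by simp, by simp, by simp, by simp, by simp, ?_, by simp⟩, ?_⟩
      · refine List.isChain_cons.2 ⟨?_, hi.red⟩
        intro y hy
        rw [Option.mem_def] at hy
        rcases t with _ | ⟨x, u⟩
        · rw [hi.nil.1 rfl] at hy; simp at hy
        · have hx0 : (x : V) ≠ 0 := fun h => (List.isChain_cons_cons.1 hred).1 h.symm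
          have := hi.hne (by simp [hx0])
          rw [hy] at this
          intro h; exact this (by rw [h])
      · intro hlast
        rcases t with _ | ⟨x, u⟩
        · rw [List.getLast?_singleton] at hlast; exact absurd hlast (by decide)
        · rw [List.getLast?_cons_cons] at hlast
          have h1 := hi.last1 hlast
          have ht'ne : t' ≠ [] := fun h => List.cons_ne_nil _ _ (hi.nil.2 h)
          rcases t' with _ | ⟨w, u'⟩
          · exact absurd rfl ht'ne
          · rw [List.getLast?_cons_cons]; exact h1
      · simp only [eval_cons, map_mul, hR0, he]
    · -- l = 1 :: t
      subst hv
      rcases t with _ | ⟨w, u⟩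
      · -- l = [1]
        refine ⟨[1, 2, 1], ⟨?_, by simp, by simp, by simp, by simp, by simp, fun _ => rfl,
          by simp⟩, ?_⟩
        · exact List.isChain_cons_cons.2 ⟨by decide, List.isChain_cons_cons.2 ⟨by decide,
            List.isChain_singleton _⟩⟩
        · simp only [eval_cons, eval_nil, map_mul, hR1, mul_one, mul_assoc, map_one]
      obtain hw | hw | hw := fin3_cases w
      · -- l = 1 :: 0 :: u
        subst hw
        have hredt : Red (0 :: u) := (List.isChain_cons_cons.1 hred).2
        obtain ⟨t', hi, he⟩ := ih _ hlt hredt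
        have ht'0 : t'.head? = some 0 := hi.h0 (by simp)
        rcases t' with _ | ⟨w', u'⟩
        · simp at ht'0
        have hw' : w' = 0 := by simpa using ht'0
        subst hw'
        refine ⟨1 :: 2 :: 1 :: 0 :: u', ⟨?_, by simp, by simp, by simp, by simp, by simp, ?_,
          by simp⟩, ?_⟩
        · exact List.isChain_cons_cons.2 ⟨by decide, List.isChain_cons_cons.2 ⟨by decide,
            List.isChain_cons_cons.2 ⟨by decide, hi.red⟩⟩⟩
        · intro hlast
          rw [List.getLast?_cons_cons] at hlast
          have h1 := hi.last1 hlast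
          rw [List.getLast?_cons_cons, List.getLast?_cons_cons, List.getLast?_cons_cons]
          exact h1
        · have hu : eval u' = Raut (eval u) := by
            have h := he
            simp only [eval_cons, map_mul, hR0] at h
            exact mul_left_cancel h
          simp [eval_cons, map_mul, hR0, hR1, hR2, hu, mul_assoc, gen_mul_cancel, gen_sq,
            mul_one]
      · -- l = 1 :: 1 :: u  impossible
        exact absurd hw.symm (List.isChain_cons_cons.1 hred).1
      · -- l = 1 :: 2 :: u
        subst hw
        have hredt : Red (2 :: u) := (List.isChain_cons_cons.1 hred).2
        have hredu : Red u := (List.isChain_cons.1 hredt).2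
        have hlu : u.length ≤ N := by
          simp only [List.length_cons] at hl ⊢; omega
        obtain ⟨t', hi, he⟩ := ih u hlu hredu
        refine ⟨1 :: 2 :: t', ⟨?_, by simp, by simp, by simp, by simp, by simp, ?_, by simp⟩, ?_⟩
        · refine List.isChain_cons_cons.2 ⟨by decide, List.isChain_cons.2 ⟨?_, hi.red⟩⟩
          intro y hy
          rw [Option.mem_def] at hy
          rcases u with _ | ⟨x, u''⟩
          · rw [hi.nil.1 rfl] at hy; simp at hy
          obtain hx | hx | hx := fin3_cases x
          · subst hx
            have := hi.h0 (by simp)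
            rw [hy] at this
            have : y = 0 := by simpa using this
            subst this; decide
          · subst hx
            have := hi.h1 (by simp)
            rw [hy] at this
            have : y = 1 := by simpa using this
            subst this; decide
          · exact absurd hx.symm (List.isChain_cons_cons.1 hredt).1
        · intro hlast
          rw [List.getLast?_cons_cons] at hlast
          rcases u with _ | ⟨x, u''⟩
          · rw [List.getLast?_singleton] at hlast; exact absurd hlast (by decide)
          rw [List.getLast?_cons_cons] at hlast
          have h1 := hi.last1 hlast
          have ht'ne : t' ≠ [] := fun h => List.cons_ne_nil _ _ (hi.nil.2 h)
          rcases t' with _ | ⟨w', u'⟩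
          · exact absurd rfl ht'ne
          rw [List.getLast?_cons_cons, List.getLast?_cons_cons]
          exact h1
        · simp [eval_cons, map_mul, hR1, hR2, he, mul_assoc, gen_mul_cancel, gen_sq, mul_one]
    · -- l = 2 :: t
      subst hv
      rcases t with _ | ⟨w, u⟩
      · -- l = [2]
        exact ⟨[1], ⟨List.isChain_singleton _, by simp, by simp, by simp, by simp, by simp,
          by simp, fun _ => rfl⟩, by simp [hR2]⟩
      obtain hw | hw | hw := fin3_cases w
      · -- l = 2 :: 0 :: u
        subst hw
        have hredt : Red (0 :: u) := (List.isChain_cons_cons.1 hred).2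
        obtain ⟨t', hi, he⟩ := ih _ hlt hredt
        have ht'0 : t'.head? = some 0 := hi.h0 (by simp)
        rcases t' with _ | ⟨w', u'⟩
        · simp at ht'0
        have hw' : w' = 0 := by simpa using ht'0
        subst hw'
        refine ⟨1 :: 0 :: u', ⟨?_, by simp, by simp, by simp, by simp, by simp, ?_, ?_⟩, ?_⟩
        · exact List.isChain_cons_cons.2 ⟨by decide, hi.red⟩
        · intro hlast
          rw [List.getLast?_cons_cons] at hlast ⊢
          exact hi.last1 hlast
        · intro h; simp at h
        · simp only [eval_cons, map_mul, hR2, he]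
      · -- l = 2 :: 1 :: u
        subst hw
        rcases u with _ | ⟨x, u'⟩
        · -- l = [2, 1]
          refine ⟨[2, 1], ⟨List.isChain_cons_cons.2 ⟨by decide, List.isChain_singleton _⟩, by simp,
            by simp, by simp, by simp, fun _ _ => rfl, by simp, by simp⟩, ?_⟩
          simp only [eval_cons, eval_nil, map_mul, hR1, hR2, mul_one, mul_assoc, gen_mul_cancel,
            map_one]
        obtain hx | hx | hx := fin3_cases x
        · -- l = 2 :: 1 :: 0 :: u'
          subst hx
          have hredt : Red (0 :: u') := (List.isChain_cons_cons.1 (List.isChain_cons_cons.1 hred).2).2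
          have hlu : (0 :: u').length ≤ N := by
            simp only [List.length_cons] at hl ⊢; omega
          obtain ⟨t', hi, he⟩ := ih _ hlu hredt
          have ht'0 : t'.head? = some 0 := hi.h0 (by simp)
          rcases t' with _ | ⟨w', v'⟩
          · simp at ht'0
          have hw' : w' = 0 := by simpa using ht'0
          subst hw'
          refine ⟨2 :: 1 :: 0 :: v', ⟨?_, by simp, by simp, by simp, by simp, fun _ _ => rfl, ?_,
            by simp⟩, ?_⟩
          · exact List.isChain_cons_cons.2 ⟨by decide, List.isChain_cons_cons.2 ⟨by decide, hi.red⟩⟩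
          · intro hlast
            rw [List.getLast?_cons_cons, List.getLast?_cons_cons] at hlast ⊢
            exact hi.last1 hlast
          · have hu : eval v' = Raut (eval u') := by
              have h := he
              simp only [eval_cons, map_mul, hR0] at h
              exact mul_left_cancel h
            simp [eval_cons, map_mul, hR0, hR1, hR2, hu, mul_assoc, gen_mul_cancel, gen_sq,
              mul_one]
        · exact absurd hx.symm (List.isChain_cons_cons.1 (List.isChain_cons_cons.1 hred).2).1
        · -- l = 2 :: 1 :: 2 :: u'
          subst hx
          rcases u' with _ | ⟨y, x'⟩
          · -- l = [2,1,2]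
            refine ⟨[2], ⟨List.isChain_singleton _, by simp, by simp, by simp, by simp,
              fun _ _ => rfl, by simp, by simp⟩, ?_⟩
            simp [eval_cons, eval_nil, map_mul, hR1, hR2, mul_one, mul_assoc, gen_mul_cancel,
              gen_sq]
          obtain hy | hy | hy := fin3_cases y
          · -- l = 2 :: 1 :: 2 :: 0 :: x'
            subst hy
            have hredt : Red (0 :: x') :=
              (List.isChain_cons_cons.1 (List.isChain_cons_cons.1 (List.isChain_cons_cons.1 hred).2).2).2
            have hlu : (0 :: x').length ≤ N := by
              simp only [List.length_cons] at hl ⊢; omega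
            obtain ⟨t', hi, he⟩ := ih _ hlu hredt
            have ht'0 : t'.head? = some 0 := hi.h0 (by simp)
            rcases t' with _ | ⟨w', v'⟩
            · simp at ht'0
            have hw' : w' = 0 := by simpa using ht'0
            subst hw'
            refine ⟨2 :: 0 :: v', ⟨?_, by simp, by simp, by simp, by simp, fun _ _ => rfl, ?_,
              by simp⟩, ?_⟩
            · exact List.isChain_cons_cons.2 ⟨by decide, hi.red⟩
            · intro hlast
              rw [List.getLast?_cons_cons, List.getLast?_cons_cons,
                List.getLast?_cons_cons] at hlast
              rw [List.getLast?_cons_cons]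
              exact hi.last1 hlast
            · have hu : eval v' = Raut (eval x') := by
                have h := he
                simp only [eval_cons, map_mul, hR0] at h
                exact mul_left_cancel h
              simp [eval_cons, map_mul, hR0, hR1, hR2, hu, mul_assoc, gen_mul_cancel, gen_sq,
                mul_one]
          · -- l = 2 :: 1 :: 2 :: 1 :: x'   (P8)
            subst hy
            have hred1x : Red (1 :: x') :=
              (List.isChain_cons_cons.1 (List.isChain_cons_cons.1 (List.isChain_cons_cons.1 hred).2).2).2
            have hredsub : Red (2 :: 1 :: x') := List.isChain_cons_cons.2 ⟨by decide, hred1x⟩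
            have hlsub : (2 :: 1 :: x').length ≤ N := by
              simp only [List.length_cons] at hl ⊢; omega
            obtain ⟨t', hi, he⟩ := ih _ hlsub hredsub
            have ht'2 : t'.head? = some 2 := hi.h21 x' rfl
            rcases t' with _ | ⟨w', v'⟩
            · simp at ht'2
            have hw' : w' = 2 := by simpa using ht'2
            subst hw'
            refine ⟨2 :: 1 :: 2 :: v', ⟨?_, by simp, by simp, by simp, by simp, fun _ _ => rfl,
              ?_, by simp⟩, ?_⟩
            · exact List.isChain_cons_cons.2 ⟨by decide, List.isChain_cons_cons.2 ⟨by decide, hi.red⟩⟩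
            · intro hlast
              rw [List.getLast?_cons_cons, List.getLast?_cons_cons,
                List.getLast?_cons_cons] at hlast
              have h1 : (2 :: 1 :: x' : List V).getLast? = some 1 := by
                rw [List.getLast?_cons_cons]; exact hlast
              have h2 := hi.last1 h1
              rw [List.getLast?_cons_cons, List.getLast?_cons_cons]
              exact h2
            · have hv : eval v' = gen 1 * Raut (eval x') := by
                have h := he
                simp only [eval_cons, map_mul, hR1, hR2, mul_assoc, gen_mul_cancel] at h
                exact mul_left_cancel h
              simp [eval_cons, map_mul, hR1, hR2, hv, mul_assoc, gen_mul_cancel, gen_sq,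
                mul_one]
          · exact absurd hy.symm
              (List.isChain_cons_cons.1 (List.isChain_cons_cons.1 (List.isChain_cons_cons.1 hred).2).2).1
      · -- l = 2 :: 2 :: u  impossible
        exact absurd hw.symm (List.isChain_cons_cons.1 hred).1

end RStep

end Stmt17

namespace Stmt17

lemma genA : gen 0 = A := rfl
lemma genB : gen 1 = B := rfl
lemma genC : gen 2 = C := rfl

/-- the letter swap 0 ↔ 2 -/
def sw : V → V := ![2, 1, 0]

lemma sw_sw (v : V) : sw (sw v) = v := by revert v; decide

lemma sw_ne {a b : V} (h : a ≠ b) : sw a ≠ sw b := by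
  intro hc
  exact h (by rw [← sw_sw a, hc, sw_sw])

/-- the swap automorphism as a hom -/
def σh : G →* G :=
  PresentedGroup.toGroup (f := fun v => gen (sw v)) (by
    intro r hr
    rcases hr with h | h | h <;> subst h <;> simp [map_mul] <;> exact gen_sq _)

lemma σh_gen (v : V) : σh (gen v) = gen (sw v) := by
  simp [σh, gen]

lemma σh_eval (l : List V) : σh (eval l) = eval (l.map sw) := by
  induction l with
  | nil => simp
  | cons v t ih => simp [map_mul, σh_gen, ih]

lemma red_map_sw {l : List V} (h : Red l) : Red (l.map sw) :=
  (List.isChain_map sw).mpr (h.imp fun _ _ hab => sw_ne hab)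

lemma map_sw_map_sw (l : List V) : (l.map sw).map sw = l := by
  induction l with
  | nil => rfl
  | cons a t ih => simp [sw_sw, ih]

lemma getLast?_map_sw (l : List V) : (l.map sw).getLast? = l.getLast?.map sw := by
  induction l with
  | nil => rfl
  | cons a t ih =>
    cases t with
    | nil => rfl
    | cons b u =>
      rw [List.map_cons, List.map_cons, List.getLast?_cons_cons, ← List.map_cons,
        List.getLast?_cons_cons]
      exact ih

/-- the predicate "image of B under a nonempty positive composition" -/
def GoodS (g : G) : Prop :=
  ∃ l : List V, Red l ∧ l.head? = some 1 ∧ l.getLast? = some 1 ∧ l ≠ [1] ∧ eval l = g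

section Closure

variable {Raut Laut : MulAut G}

lemma goodS_R (hR0 : Raut (gen 0) = gen 0) (hR1 : Raut (gen 1) = gen 1 * gen 2 * gen 1)
    (hR2 : Raut (gen 2) = gen 1) {g : G} (h : GoodS g) : GoodS (Raut g) := by
  obtain ⟨l, hred, hh, hl, hne, he⟩ := h
  obtain ⟨l', hi, he'⟩ := rstep hR0 hR1 hR2 l.length l le_rfl hred
  refine ⟨l', hi.red, hi.h1 hh, hi.last1 hl, ?_, by rw [he', he]⟩
  intro hcon
  have := hi.one hcon
  rw [this] at hh
  simp at hh

lemma σ_σ (x : G) : σh (σh x) = x := by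
  have : σh.comp σh = MonoidHom.id G := by
    ext v
    show σh (σh (gen v)) = gen v
    rw [σh_gen, σh_gen, sw_sw]
  exact DFunLike.congr_fun this x

lemma goodS_σ {g : G} (h : GoodS g) : GoodS (σh g) := by
  obtain ⟨l, hred, hh, hl, hne, he⟩ := h
  refine ⟨l.map sw, red_map_sw hred, ?_, ?_, ?_, by rw [← he, σh_eval]⟩
  · rw [List.head?_map, hh]; rfl
  · rw [getLast?_map_sw, hl]; rfl
  · intro hcon
    have : l = [1] := by
      have h2 := congrArg (List.map sw) hcon
      rw [map_sw_map_sw] at h2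
      exact h2
    exact hne this
  
lemma L_eq_σRσ (hR0 : Raut (gen 0) = gen 0) (hR1 : Raut (gen 1) = gen 1 * gen 2 * gen 1)
    (hR2 : Raut (gen 2) = gen 1)
    (hL0 : Laut (gen 0) = gen 1) (hL1 : Laut (gen 1) = gen 1 * gen 0 * gen 1)
    (hL2 : Laut (gen 2) = gen 2) (x : G) : Laut x = σh (Raut (σh x)) := by
  have : (Laut : G →* G).comp (MonoidHom.id G) =
      σh.comp ((Raut : G →* G).comp σh) := by
    ext v
    show Laut (gen v) = σh (Raut (σh (gen v)))
    obtain hv | hv | hv := fin3_cases v <;> subst hv <;>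
      simp [σh_gen, hL0, hL1, hL2, hR0, hR1, hR2, map_mul, sw] <;> rfl
  have := DFunLike.congr_fun this x
  simpa using this

lemma goodS_L (hR0 : Raut (gen 0) = gen 0) (hR1 : Raut (gen 1) = gen 1 * gen 2 * gen 1)
    (hR2 : Raut (gen 2) = gen 1)
    (hL0 : Laut (gen 0) = gen 1) (hL1 : Laut (gen 1) = gen 1 * gen 0 * gen 1)
    (hL2 : Laut (gen 2) = gen 2) {g : G} (h : GoodS g) : GoodS (Laut g) := by
  rw [L_eq_σRσ hR0 hR1 hR2 hL0 hL1 hL2]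
  exact goodS_σ (goodS_R hR0 hR1 hR2 (goodS_σ h))

end Closure

/-- words for positive D-conjugates of B -/
def wp : ℕ → List V
  | 0 => [1]
  | k + 1 => [2, 1, 0] ++ wp k ++ [0, 1, 2]

def wn : ℕ → List V
  | 0 => [1]
  | k + 1 => [0, 1, 2] ++ wn k ++ [2, 1, 0]

lemma wp_spec (k : ℕ) : Red (wp k) ∧
    (wp k).head? = some (if k = 0 then 1 else 2) ∧
    (wp k).getLast? = some (if k = 0 then 1 else 2) := by
  induction k with
  | zero => refine ⟨List.isChain_singleton _, rfl, rfl⟩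
  | succ k ih =>
    obtain ⟨hred, hh, hl⟩ := ih
    have hhead : (wp k).head? = some 1 ∨ (wp k).head? = some 2 := by
      by_cases h : k = 0 <;> simp [h] at hh ⊢ <;> [left; right] <;> exact hh
    have hlast : (wp k).getLast? = some 1 ∨ (wp k).getLast? = some 2 := by
      by_cases h : k = 0 <;> simp [h] at hl ⊢ <;> [left; right] <;> exact hl
    have hne : wp k ≠ [] := by
      intro h; rw [h] at hh; simp at hh
    have hch3 : List.Chain' (fun a b : V => a ≠ b) [2,1,0] :=
      List.isChain_cons_cons.2 ⟨by decide, List.isChain_cons_cons.2 ⟨by decide, List.isChain_singleton _⟩⟩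
    have hch3' : List.Chain' (fun a b : V => a ≠ b) [0,1,2] :=
      List.isChain_cons_cons.2 ⟨by decide, List.isChain_cons_cons.2 ⟨by decide, List.isChain_singleton _⟩⟩
    constructor
    · show List.Chain' (fun a b : V => a ≠ b) ([2,1,0] ++ (wp k ++ [0,1,2]))
      refine List.IsChain.append hch3 (List.IsChain.append hred hch3' ?_) ?_
      · intro x hx y hy
        simp only [List.head?_cons, Option.mem_def, Option.some.injEq] at hy
        subst hy
        rcases hlast with h | h <;> rw [Option.mem_def, h] at hx <;>
          simp at hx <;> subst hx <;> decide
      · intro x hx y hy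
        simp only [List.getLast?_cons_cons, List.getLast?_singleton, Option.mem_def,
          Option.some.injEq] at hx
        subst hx
        rcases hhead with h | h <;>
          rw [List.head?_append, h] at hy <;> simp at hy <;> subst hy <;> decide
    constructor
    · rfl
    · show ([2,1,0] ++ (wp k ++ [0,1,2])).getLast? = _
      rw [List.getLast?_append_of_ne_nil _ (by simp),
        List.getLast?_append_of_ne_nil _ (by simp)]
      rfl

lemma map_sw_wp (k : ℕ) : (wp k).map sw = wn k := by
  induction k with
  | zero => rfl
  | succ k ih =>
    show List.map sw ([2,1,0] ++ (wp k ++ [0,1,2])) = [0,1,2] ++ (wn k ++ [2,1,0])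
    rw [List.map_append, List.map_append, ih]
    have h1 : List.map sw [2,1,0] = [0,1,2] := by decide
    have h2 : List.map sw [0,1,2] = [2,1,0] := by decide
    rw [h1, h2]

lemma wn_spec (k : ℕ) : Red (wn k) ∧
    (wn k).head? = some (if k = 0 then 1 else 0) ∧
    (wn k).getLast? = some (if k = 0 then 1 else 0) := by
  obtain ⟨hred, hh, hl⟩ := wp_spec k
  rw [← map_sw_wp]
  refine ⟨red_map_sw hred, ?_, ?_⟩
  · rw [List.head?_map, hh]
    by_cases h : k = 0 <;> simp [h] <;> rfl
  · rw [getLast?_map_sw, hl]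
    by_cases h : k = 0 <;> simp [h] <;> rfl

lemma eval_D : eval [2, 1, 0] = D := by
  simp [eval, genA, genB, genC, D, mul_assoc]

lemma eval_Dinv : eval [0, 1, 2] = D⁻¹ := by
  have : D⁻¹ = A * B * C := by
    rw [D]
    rw [mul_inv_rev, mul_inv_rev]
    rw [← genA, ← genB, ← genC, gen_inv, gen_inv, gen_inv, mul_assoc]
  rw [this]
  simp [eval, genA, genB, genC, mul_assoc]

lemma eval_wp (k : ℕ) : eval (wp k) = D ^ k * B * (D ^ k)⁻¹ := by
  induction k with
  | zero => simp [wp, eval, genB]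
  | succ k ih =>
    show eval ([2,1,0] ++ (wp k ++ [0,1,2])) = _
    rw [eval_append, eval_append, ih, eval_D, eval_Dinv]
    rw [pow_succ]
    group

lemma eval_wn (k : ℕ) : eval (wn k) = (D ^ k)⁻¹ * B * D ^ k := by
  induction k with
  | zero => simp [wn, eval, genB]
  | succ k ih =>
    show eval ([0,1,2] ++ (wn k ++ [2,1,0])) = _
    rw [eval_append, eval_append, ih, eval_D, eval_Dinv]
    rw [pow_succ]
    group

/-- words for D-conjugates of B, over ℤ -/
lemma exists_word_Dconj (k : ℤ) : ∃ l : List V, Red l ∧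
    eval l = D ^ k * B * (D ^ k)⁻¹ ∧ (k = 0 → l = [1]) ∧ (k ≠ 0 → l.head? ≠ some 1) := by
  rcases lt_trichotomy k 0 with hk | hk | hk
  · -- k < 0
    obtain ⟨n, hn⟩ : ∃ n : ℕ, k = -(n + 1 : ℕ) := by
      refine ⟨(-k - 1).toNat, ?_⟩
      have : ((-k - 1).toNat : ℤ) = -k - 1 := Int.toNat_of_nonneg (by omega)
      omega
    obtain ⟨hred, hh, _⟩ := wn_spec (n + 1)
    refine ⟨wn (n + 1), hred, ?_, by omega, ?_⟩
    · rw [eval_wn, hn]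
      have h1 : (D : G) ^ (-(n + 1 : ℕ) : ℤ) = (D ^ (n + 1))⁻¹ := by
        rw [zpow_neg, zpow_natCast]
      rw [h1, inv_inv]
    · intro _
      rw [hh]
      simp
  · -- k = 0
    subst hk
    exact ⟨[1], List.isChain_singleton _, by simp [eval, genB], fun _ => rfl, fun h => absurd rfl h⟩
  · -- k > 0
    obtain ⟨n, hn⟩ : ∃ n : ℕ, k = (n + 1 : ℕ) := by
      refine ⟨(k - 1).toNat, ?_⟩
      have : ((k - 1).toNat : ℤ) = k - 1 := Int.toNat_of_nonneg (by omega)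
      omega
    obtain ⟨hred, hh, _⟩ := wp_spec (n + 1)
    refine ⟨wp (n + 1), hred, ?_, by omega, ?_⟩
    · rw [eval_wp, hn, zpow_natCast]
    · intro _
      rw [hh]
      simp

/-- MAIN EXCLUSION: a GoodS element is never a D-conjugate of B. -/
lemma goodS_ne_Dconj {g : G} (h : GoodS g) (k : ℤ) : g ≠ D ^ k * B * (D ^ k)⁻¹ := by
  obtain ⟨l, hred, hh, hl, hne, hev⟩ := h
  obtain ⟨l', hred', hev', h0, hk0⟩ := exists_word_Dconj k
  intro hc
  have : l = l' := eval_inj hred hred' (by rw [hev, hev', hc])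
  by_cases hk : k = 0
  · exact hne (this.trans (h0 hk))
  · exact hk0 hk (this ▸ hh)

/-- B is a D^k-conjugate of itself only for k = 0 -/
lemma Dconj_B_eq (k : ℤ) (h : D ^ k * B * (D ^ k)⁻¹ = B) : k = 0 := by
  obtain ⟨l', hred', hev', h0, hk0⟩ := exists_word_Dconj k
  by_contra hk
  have : l' = [1] := eval_inj hred' (List.isChain_singleton _)
    (by rw [hev', h]; simp [eval, genB])
  exact hk0 hk (by rw [this]; rfl)

end Stmt17

namespace Stmt17

lemma Asq : A * A = 1 := gen_sq 0
lemma Bsq : B * B = 1 := gen_sq 1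
lemma Csq : C * C = 1 := gen_sq 2
lemma Ainv : A⁻¹ = A := gen_inv 0
lemma Binv : B⁻¹ = B := gen_inv 1
lemma Cinv : C⁻¹ = C := gen_inv 2
lemma cA (x : G) : A * (A * x) = x := gen_mul_cancel 0 x
lemma cB (x : G) : B * (B * x) = x := gen_mul_cancel 1 x
lemma cC (x : G) : C * (C * x) = x := gen_mul_cancel 2 x

lemma B_ne_C : B ≠ C := by
  intro h
  have h1 : eval [1] = eval [2] := by simp [eval, genB, genC, h]
  have := eval_inj (List.isChain_singleton _) (List.isChain_singleton _) h1
  simp at this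

/-- the element L(C·B·C⁻¹) -/
def X : G := C * (B * A * B⁻¹) * C⁻¹

section Main

variable {Rm Lm : MulAut G}
  (hRA : Rm A = A) (hRB : Rm B = B * C * B⁻¹) (hRC : Rm C = B)
  (hLA : Lm A = B) (hLB : Lm B = B * A * B⁻¹) (hLC : Lm C = C)
  {f : ℤ → MulAut G} (hfRL : ∀ n : ℤ, f n = Rm ∨ f n = Lm)
  {F : ℤ → MulAut G} (hF0 : F 0 = 1) (hF : ∀ n : ℤ, F n = F (n - 1) * f n)
  {np : ℤ → ℤ} (hnp : ∀ n : ℤ, IsLeast {k : ℤ | n < k ∧ f k = f n} (np n))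

include hRA hRB hRC in
lemma hR0' : Rm (gen 0) = gen 0 := by rw [genA]; exact hRA
include hRA hRB hRC in
lemma hR1' : Rm (gen 1) = gen 1 * gen 2 * gen 1 := by
  rw [genB, genC, hRB, Binv]
include hRA hRB hRC in
lemma hR2' : Rm (gen 2) = gen 1 := by rw [genC, genB]; exact hRC
include hLA hLB hLC in
lemma hL0' : Lm (gen 0) = gen 1 := by rw [genA, genB]; exact hLA
include hLA hLB hLC in
lemma hL1' : Lm (gen 1) = gen 1 * gen 0 * gen 1 := by
  rw [genB, genA, hLB, Binv]
include hLA hLB hLC in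
lemma hL2' : Lm (gen 2) = gen 2 := by rw [genC]; exact hLC

include hRA hRB hRC in
lemma RD : Rm D = D := by
  rw [D, map_mul, map_mul, hRA, hRB, hRC, Binv]
  rw [show B * (B * C * B) * A = (B * B) * (C * (B * A)) by group, Bsq]
  group

include hLA hLB hLC in
lemma LD : Lm D = D := by
  rw [D, map_mul, map_mul, hLA, hLB, hLC, Binv]
  rw [show C * (B * A * B) * B = C * (B * (A * (B * B))) by group, Bsq]
  group

lemma R_ne_L (hRC : Rm C = B) (hLC : Lm C = C) : Rm ≠ Lm := by
  intro h
  exact B_ne_C (by rw [← hRC, h, hLC])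

include hRA hRB hRC hLA hLB hLC hfRL hF0 hF in
lemma FD : ∀ n : ℤ, F n D = D := by
  have fD : ∀ n : ℤ, f n D = D := fun n =>
    (hfRL n).elim (fun h => by rw [h]; exact RD hRA hRB hRC)
      (fun h => by rw [h]; exact LD hLA hLB hLC)
  have step : ∀ n : ℤ, F n D = F (n - 1) D := fun n => by
    rw [hF n, MulAut.mul_apply, fD]
  intro n
  induction n using Int.induction_on with
  | zero => rw [hF0]; rfl
  | succ i ih =>
    have h := step ((i : ℤ) + 1)
    rw [show ((i : ℤ) + 1) - 1 = (i : ℤ) by ring] at h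
    rw [h]; exact ih
  | pred i ih =>
    have h := step (-(i : ℤ))
    rw [show -(i : ℤ) - 1 = -(i : ℤ) - 1 from rfl] at h
    rw [← h]; exact ih

include hRA hRB hRC hLA hLB hLC hfRL hF0 hF in
lemma FinvD : ∀ n : ℤ, (F n)⁻¹ D = D := by
  intro n
  have h := FD hRA hRB hRC hLA hLB hLC hfRL hF0 hF n
  calc (F n)⁻¹ D = (F n)⁻¹ (F n D) := by rw [h]
    _ = ((F n)⁻¹ * F n) D := rfl
    _ = D := by rw [inv_mul_cancel]; rfl

include hfRL hF in
lemma comp_list : ∀ (d : ℕ) (n : ℤ), ∃ cs : List (MulAut G),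
    (∀ φ ∈ cs, φ = Rm ∨ φ = Lm) ∧ (F (n - 1))⁻¹ * F (n + d - 1) = cs.prod ∧
    (cs = [] ↔ d = 0) := by
  intro d
  induction d with
  | zero =>
    intro n
    refine ⟨[], by simp, ?_, by simp⟩
    rw [show n + ((0 : ℕ) : ℤ) - 1 = n - 1 by push_cast; ring]
    simp
  | succ d ih =>
    intro n
    obtain ⟨cs, hmem, hprod, _⟩ := ih n
    refine ⟨cs ++ [f (n + d)], ?_, ?_, by simp⟩
    · intro φ hφ
      rcases List.mem_append.1 hφ with h | h
      · exact hmem φ h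
      · simp at h; rw [h]; exact hfRL _
    · rw [List.prod_append, List.prod_singleton, ← hprod, mul_assoc]
      rw [show n + ((d : ℕ) + 1 : ℕ) - 1 = n + (d : ℤ) by push_cast; ring]
      rw [hF (n + d)]

include hRA hRB hRC hLA hLB hLC in
lemma goodS_prod : ∀ cs : List (MulAut G), (∀ φ ∈ cs, φ = Rm ∨ φ = Lm) → cs ≠ [] →
    GoodS (cs.prod B) := by
  have hgR : GoodS (Rm B) := by
    refine ⟨[1, 2, 1], List.isChain_cons_cons.2 ⟨by decide, List.isChain_cons_cons.2 ⟨by decide,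
      List.isChain_singleton _⟩⟩, rfl, rfl, by simp, ?_⟩
    rw [hRB, Binv]
    simp [eval, genB, genC, mul_assoc]
  have hgL : GoodS (Lm B) := by
    refine ⟨[1, 0, 1], List.isChain_cons_cons.2 ⟨by decide, List.isChain_cons_cons.2 ⟨by decide,
      List.isChain_singleton _⟩⟩, rfl, rfl, by simp, ?_⟩
    rw [hLB, Binv]
    simp [eval, genB, genA, mul_assoc]
  intro cs
  induction cs with
  | nil => intro _ h; exact absurd rfl h
  | cons φ cs' ih =>
    intro hmem _
    rw [List.prod_cons, MulAut.mul_apply]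
    by_cases h : cs' = []
    · subst h
      simp only [List.prod_nil]
      rcases hmem φ (by simp) with hφ | hφ <;> rw [hφ] <;>
        [exact hgR; exact hgL] <;> skip
    · have hg := ih (fun ψ hψ => hmem ψ (by simp [hψ])) h
      rcases hmem φ (by simp) with hφ | hφ <;> rw [hφ]
      · exact goodS_R (hR0' hRA hRB hRC) (hR1' hRA hRB hRC) (hR2' hRA hRB hRC) hg
      · exact goodS_L (hR0' hRA hRB hRC) (hR1' hRA hRB hRC) (hR2' hRA hRB hRC)
          (hL0' hLA hLB hLC) (hL1' hLA hLB hLC) (hL2' hLA hLB hLC) hg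

include hRA hRB hRC hLA hLB hLC hfRL hF0 hF in
lemma key_le {m n m' n' : ℤ} (hle : n ≤ n')
    (h : D ^ m * F (n - 1) B * (D ^ m)⁻¹ = D ^ m' * F (n' - 1) B * (D ^ m')⁻¹) :
    m = m' ∧ n = n' := by
  have heq : F (n' - 1) B = D ^ (m - m') * F (n - 1) B * (D ^ (m - m'))⁻¹ := by
    calc F (n' - 1) B
        = (D ^ m')⁻¹ * (D ^ m' * F (n' - 1) B * (D ^ m')⁻¹) * D ^ m' := by group
      _ = (D ^ m')⁻¹ * (D ^ m * F (n - 1) B * (D ^ m)⁻¹) * D ^ m' := by rw [← h]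
      _ = D ^ (m - m') * F (n - 1) B * (D ^ (m - m'))⁻¹ := by group
  obtain ⟨cs, hmem, hprod, hnil⟩ := comp_list hfRL hF (n' - n).toNat n
  have hcast : ((n' - n).toNat : ℤ) = n' - n := Int.toNat_of_nonneg (by omega)
  have hΨ : (F (n - 1))⁻¹ * F (n' - 1) = cs.prod := by
    rw [show n' - 1 = n + ((n' - n).toNat : ℤ) - 1 by rw [hcast]; ring]
    exact hprod
  have hFB : (F (n - 1))⁻¹ ((F (n - 1)) B) = B := by
    rw [← MulAut.mul_apply, inv_mul_cancel]; rfl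
  have happ : cs.prod B = D ^ (m - m') * B * (D ^ (m - m'))⁻¹ := by
    rw [← hΨ, MulAut.mul_apply, heq, map_mul, map_mul, map_zpow, map_inv, map_zpow]
    rw [FinvD hRA hRB hRC hLA hLB hLC hfRL hF0 hF, hFB]
  by_cases hnn : n = n'
  · subst hnn
    have hcs : cs = [] := hnil.2 (by omega)
    rw [hcs] at happ
    simp only [List.prod_nil] at happ
    have : B = D ^ (m - m') * B * (D ^ (m - m'))⁻¹ := by
      simpa using happ
    have hk := Dconj_B_eq (m - m') this.symm
    exact ⟨by omega, rfl⟩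
  · exfalso
    have hne : cs ≠ [] := fun hc => hnn (by have := hnil.1 hc; omega)
    exact goodS_ne_Dconj (goodS_prod hRA hRB hRC hLA hLB hLC cs hmem hne) (m - m') happ

include hRA hRB hRC hLA hLB hLC hfRL hF0 hF in
lemma key {m n m' n' : ℤ}
    (h : D ^ m * F (n - 1) B * (D ^ m)⁻¹ = D ^ m' * F (n' - 1) B * (D ^ m')⁻¹) :
    m = m' ∧ n = n' := by
  rcases le_total n n' with hle | hle
  · exact key_le hRA hRB hRC hLA hLB hLC hfRL hF0 hF hle h
  · have := key_le hRA hRB hRC hLA hLB hLC hfRL hF0 hF hle h.symm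
    exact ⟨this.1.symm, this.2.symm⟩

include hnp in
lemma np_mem (n : ℤ) : n < np n ∧ f (np n) = f n := (hnp n).1

include hnp in
lemma gap {n k : ℤ} (h1 : n < k) (h2 : k < np n) : f k ≠ f n := by
  intro hc
  have := (hnp n).2 (Set.mem_setOf.2 ⟨h1, hc⟩)
  omega

include hRA hRB hRC hLA hLB hLC hfRL hF hnp in
lemma teleR {n : ℤ} (hn : f n = Rm) : F (np n) (C * B * C⁻¹) = F (n - 1) B := by
  obtain ⟨hlt, hfe⟩ := np_mem hnp n
  have main : ∀ j : ℕ, ∀ k : ℤ, k = n + j → k < np n → F k C = F (n - 1) B := by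
    intro j
    induction j with
    | zero =>
      intro k hk _
      have : k = n := by push_cast at hk; omega
      subst this
      rw [hF k, MulAut.mul_apply, hn, hRC]
    | succ j ih =>
      intro k hk hklt
      have hkn : n < k := by push_cast at hk; omega
      have hfk : f k = Lm := by
        rcases hfRL k with h | h
        · exact absurd (h.trans hn.symm) (gap hnp hkn hklt)
        · exact h
      rw [hF k, MulAut.mul_apply, hfk, hLC]
      exact ih (k - 1) (by push_cast at hk ⊢; omega) (by omega)
  have h1 : F (np n) (C * B * C⁻¹) = F (np n - 1) (Rm (C * B * C⁻¹)) := by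
    rw [hF (np n), MulAut.mul_apply, hfe, hn]
  have h2 : Rm (C * B * C⁻¹) = C := by
    rw [map_mul, map_mul, map_inv, hRB, hRC, Binv]
    rw [show B * (B * C * B) * B = (B * B) * (C * (B * B)) by group, Bsq]
    simp [Bsq]
  rw [h1, h2]
  exact main (np n - 1 - n).toNat (np n - 1)
    (by rw [Int.toNat_of_nonneg (by omega)]; ring) (by omega)

include hRA hRB hRC hLA hLB hLC hfRL hF0 hF hnp in
lemma teleL {n : ℤ} (hn : f n = Lm) : F (np n) (C * B * C⁻¹) = D * F (n - 1) B * D⁻¹ := by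
  obtain ⟨hlt, hfe⟩ := np_mem hnp n
  have hLX : Lm (C * B * C⁻¹) = X := by
    rw [map_mul, map_mul, map_inv, hLB, hLC, X]
  have hRX : Rm X = X := by
    rw [X, map_mul, map_mul, map_inv, map_mul, map_mul, map_inv, hRA, hRB, hRC]
    simp only [mul_inv_rev, inv_inv, Ainv, Binv, Cinv, mul_assoc, cA, cB, cC, Asq, Bsq, Csq,
      mul_one, one_mul]
  have hLX2 : Lm X = D * B * D⁻¹ := by
    rw [X, map_mul, map_mul, map_inv, map_mul, map_mul, map_inv, hLA, hLB, hLC, D]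
    simp only [mul_inv_rev, inv_inv, Ainv, Binv, Cinv, mul_assoc, cA, cB, cC, Asq, Bsq, Csq,
      mul_one, one_mul]
  have main : ∀ j : ℕ, ∀ k : ℤ, k = n + j → k < np n → F k X = D * F (n - 1) B * D⁻¹ := by
    intro j
    induction j with
    | zero =>
      intro k hk _
      have : k = n := by push_cast at hk; omega
      subst this
      rw [hF k, MulAut.mul_apply, hn, hLX2, map_mul, map_mul, map_inv]
      rw [FD hRA hRB hRC hLA hLB hLC hfRL hF0 hF (k - 1)]
    | succ j ih =>
      intro k hk hklt
      have hkn : n < k := by push_cast at hk; omega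
      have hfk : f k = Rm := by
        rcases hfRL k with h | h
        · exact h
        · exact absurd (h.trans hn.symm) (gap hnp hkn hklt)
      rw [hF k, MulAut.mul_apply, hfk, hRX]
      exact ih (k - 1) (by push_cast at hk ⊢; omega) (by omega)
  have h1 : F (np n) (C * B * C⁻¹) = F (np n - 1) X := by
    rw [hF (np n), MulAut.mul_apply, hfe, hn, hLX]
  rw [h1]
  exact main (np n - 1 - n).toNat (np n - 1)
    (by rw [Int.toNat_of_nonneg (by omega)]; ring) (by omega)

end Main

end Stmt17

open Stmt17 in
/-- The identities P_{2m,n} = P_{2m+1,n₊} (f_n = R) and P_{2m,n} = P_{2m−1,n₊}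
(f_n = L) are the only coincidences among the elements P_{m,n}. -/
theorem stmt17
    (R L : MulAut G)
    (hRA : R A = A) (hRB : R B = B * C * B⁻¹) (hRC : R C = B)
    (hLA : L A = B) (hLB : L B = B * A * B⁻¹) (hLC : L C = C)
    (P : ℤ → G)
    (hP0 : ∀ m : ℤ, P (3 * m) = D ^ m * A * (D ^ m)⁻¹)
    (hP1 : ∀ m : ℤ, P (3 * m + 1) = D ^ m * B * (D ^ m)⁻¹)
    (hP2 : ∀ m : ℤ, P (3 * m + 2) = D ^ m * C * (D ^ m)⁻¹)
    (p : ℤ) (hp : 2 ≤ p)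
    (f : ℤ → MulAut G) (hfRL : ∀ n : ℤ, f n = R ∨ f n = L)
    (hfper : ∀ n : ℤ, f (n + p) = f n) (hf0 : f 0 = L) (hf1 : f 1 = R)
    (F : ℤ → MulAut G) (hF0 : F 0 = 1) (hF : ∀ n : ℤ, F n = F (n - 1) * f n)
    (Q : ℤ → ℤ → G) (hQ : ∀ m n : ℤ, Q m n = F (n - 1) (P m))
    (PP : ℤ → ℤ → G)
    (hPPe : ∀ m n : ℤ, PP (2 * m) n = D ^ m * F (n - 1) B * (D ^ m)⁻¹)
    (hPPo : ∀ m n : ℤ, PP (2 * m + 1) n = D ^ m * F n (C * B * C⁻¹) * (D ^ m)⁻¹)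
    (np : ℤ → ℤ) (hnp : ∀ n : ℤ, IsLeast {k : ℤ | n < k ∧ f k = f n} (np n)) :
    ∀ r s r' s' : ℤ, PP r s = PP r' s' ↔
      ((r = r' ∧ s = s') ∨
       (∃ m n : ℤ, f n = R ∧
         ((r = 2 * m ∧ s = n ∧ r' = 2 * m + 1 ∧ s' = np n) ∨
          (r = 2 * m + 1 ∧ s = np n ∧ r' = 2 * m ∧ s' = n))) ∨
       (∃ m n : ℤ, f n = L ∧
         ((r = 2 * m ∧ s = n ∧ r' = 2 * m - 1 ∧ s' = np n) ∨
          (r = 2 * m - 1 ∧ s = np n ∧ r' = 2 * m ∧ s' = n)))) := by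
  -- the key injectivity
  have hkey : ∀ m n m' n' : ℤ,
      D ^ m * F (n - 1) B * (D ^ m)⁻¹ = D ^ m' * F (n' - 1) B * (D ^ m')⁻¹ →
      m = m' ∧ n = n' := fun m n m' n' h =>
    key hRA hRB hRC hLA hLB hLC hfRL hF0 hF h
  -- predecessors
  have hpred : ∀ s : ℤ, ∃ n, n < s ∧ f n = f s ∧ np n = s := by
    intro s
    have hper' : f (s - p) = f s := by
      have h := hfper (s - p)
      rw [sub_add_cancel] at h
      exact h.symm
    obtain ⟨n, hn, hmax⟩ := Int.exists_greatest_of_bdd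
      (P := fun k => k < s ∧ f k = f s) ⟨s, fun z hz => le_of_lt hz.1⟩
      ⟨s - p, ⟨by omega, hper'⟩⟩
    refine ⟨n, hn.1, hn.2, ?_⟩
    obtain ⟨h11, h12⟩ := (hnp n).1
    have h2 := (hnp n).2 (Set.mem_setOf.2 ⟨hn.1, hn.2.symm ▸ rfl⟩)
    by_contra hne
    have hlt : np n < s := lt_of_le_of_ne h2 hne
    have := hmax (np n) ⟨hlt, by rw [h12, hn.2]⟩
    omega
  -- backward identities
  have hback_R : ∀ m n : ℤ, f n = R → PP (2 * m) n = PP (2 * m + 1) (np n) := by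
    intro m n hfn
    rw [hPPe, hPPo, teleR hRA hRB hRC hLA hLB hLC hfRL hF hnp hfn]
  have hback_L : ∀ m n : ℤ, f n = L → PP (2 * m) n = PP (2 * m - 1) (np n) := by
    intro m n hfn
    rw [show (2 * m - 1 : ℤ) = 2 * (m - 1) + 1 by ring, hPPo, hPPe,
      teleL hRA hRB hRC hLA hLB hLC hfRL hF0 hF hnp hfn]
    group
  -- odd-index conversion
  have hEodd : ∀ m s : ℤ, ∃ n, n < s ∧ f n = f s ∧ np n = s ∧
      ((f s = R ∧ PP (2 * m + 1) s = D ^ m * F (n - 1) B * (D ^ m)⁻¹) ∨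
       (f s = L ∧ PP (2 * m + 1) s = D ^ (m + 1) * F (n - 1) B * (D ^ (m + 1))⁻¹)) := by
    intro m s
    obtain ⟨n, hlt, hfe, hnps⟩ := hpred s
    refine ⟨n, hlt, hfe, hnps, ?_⟩
    rcases hfRL s with hfs | hfs
    · left
      refine ⟨hfs, ?_⟩
      have ht := teleR hRA hRB hRC hLA hLB hLC hfRL hF hnp (n := n) (hfe.trans hfs)
      rw [hnps] at ht
      rw [hPPo, ht]
    · right
      refine ⟨hfs, ?_⟩
      have ht := teleL hRA hRB hRC hLA hLB hLC hfRL hF0 hF hnp (n := n) (hfe.trans hfs)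
      rw [hnps] at ht
      rw [hPPo, ht]
      group
  have hRL : R ≠ L := R_ne_L hRC hLC
  intro r s r' s'
  constructor
  · -- forward
    intro h
    rcases Int.even_or_odd r with ⟨m, hm⟩ | ⟨m, hm⟩ <;>
      rcases Int.even_or_odd r' with ⟨m', hm'⟩ | ⟨m', hm'⟩
    · -- even, even
      rw [show r = 2 * m by omega] at h ⊢
      rw [show r' = 2 * m' by omega] at h ⊢
      rw [hPPe, hPPe] at h
      obtain ⟨h1, h2⟩ := hkey m s m' s' h
      exact Or.inl ⟨by omega, h2⟩
    · -- even, odd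
      rw [show r = 2 * m by omega] at h ⊢
      rw [show r' = 2 * m' + 1 by omega] at h ⊢
      rw [hPPe] at h
      obtain ⟨n', hlt', hfe', hnps', hcase'⟩ := hEodd m' s'
      rcases hcase' with ⟨hfs', hPP'⟩ | ⟨hfs', hPP'⟩
      · rw [hPP'] at h
        obtain ⟨h1, h2⟩ := hkey m s m' n' h
        refine Or.inr (Or.inl ⟨m, s, by rw [h2, hfe', hfs'], Or.inl ⟨rfl, rfl, by omega,
          by rw [h2]; exact hnps'.symm⟩⟩)
      · rw [hPP'] at h
        obtain ⟨h1, h2⟩ := hkey m s (m' + 1) n' h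
        refine Or.inr (Or.inr ⟨m, s, by rw [h2, hfe', hfs'], Or.inl ⟨rfl, rfl, by omega,
          by rw [h2]; exact hnps'.symm⟩⟩)
    · -- odd, even
      rw [show r = 2 * m + 1 by omega] at h ⊢
      rw [show r' = 2 * m' by omega] at h ⊢
      rw [hPPe] at h
      obtain ⟨n, hlt, hfe, hnps, hcase⟩ := hEodd m s
      rcases hcase with ⟨hfs, hPP1⟩ | ⟨hfs, hPP1⟩
      · rw [hPP1] at h
        obtain ⟨h1, h2⟩ := hkey m n m' s' h
        refine Or.inr (Or.inl ⟨m', s', by rw [← h2, hfe, hfs], Or.inr ⟨by omega,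
          by rw [← h2]; exact hnps.symm, rfl, rfl⟩⟩)
      · rw [hPP1] at h
        obtain ⟨h1, h2⟩ := hkey (m + 1) n m' s' h
        refine Or.inr (Or.inr ⟨m', s', by rw [← h2, hfe, hfs], Or.inr ⟨by omega,
          by rw [← h2]; exact hnps.symm, rfl, rfl⟩⟩)
    · -- odd, odd
      rw [show r = 2 * m + 1 by omega] at h ⊢
      rw [show r' = 2 * m' + 1 by omega] at h ⊢
      obtain ⟨n, hlt, hfe, hnps, hcase⟩ := hEodd m s
      obtain ⟨n', hlt', hfe', hnps', hcase'⟩ := hEodd m' s'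
      rcases hcase with ⟨hfs, hPP1⟩ | ⟨hfs, hPP1⟩ <;>
        rcases hcase' with ⟨hfs', hPP'⟩ | ⟨hfs', hPP'⟩
      · rw [hPP1, hPP'] at h
        obtain ⟨h1, h2⟩ := hkey m n m' n' h
        exact Or.inl ⟨by omega, by rw [← hnps, ← hnps', h2]⟩
      · rw [hPP1, hPP'] at h
        obtain ⟨h1, h2⟩ := hkey m n (m' + 1) n' h
        exact absurd (by rw [← hfs, ← hfe, h2, hfe', hfs'] : R = L) hRL
      · rw [hPP1, hPP'] at h
        obtain ⟨h1, h2⟩ := hkey (m + 1) n m' n' h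
        exact absurd (by rw [← hfs', ← hfe', ← h2, hfe, hfs] : R = L) hRL
      · rw [hPP1, hPP'] at h
        obtain ⟨h1, h2⟩ := hkey (m + 1) n (m' + 1) n' h
        exact Or.inl ⟨by omega, by rw [← hnps, ← hnps', h2]⟩
  · -- backward
    intro h
    rcases h with ⟨h1, h2⟩ | ⟨m, n, hfn, hc⟩ | ⟨m, n, hfn, hc⟩
    · rw [h1, h2]
    · rcases hc with ⟨e1, e2, e3, e4⟩ | ⟨e1, e2, e3, e4⟩
      · rw [e1, e2, e3, e4]; exact hback_R m n hfn
      · rw [e1, e2, e3, e4]; exact (hback_R m n hfn).symm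
    · rcases hc with ⟨e1, e2, e3, e4⟩ | ⟨e1, e2, e3, e4⟩
      · rw [e1, e2, e3, e4]; exact hback_L m n hfn
      · rw [e1, e2, e3, e4]; exact (hback_L m n hfn).symm
end

section
/- The distinguished element D has infinite order in G, and for every element g ∈ G that is conjugate to one of A, B, C and every m ∈ ℤ, the equality Dᵐ·g·D⁻ᵐ = g implies m = 0. In particular, the elements P_j (j ∈ ℤ) are pairwise distinct. -/
namespace Aux

abbrev gen (i : Fin 3) : G := PresentedGroup.of i

lemma gen_sq (i : Fin 3) : gen i * gen i = 1 := by
  have : (PresentedGroup.mk rels (FreeGroup.of i * FreeGroup.of i) : G) = 1 := by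
    apply (QuotientGroup.eq_one_iff _).2
    apply Subgroup.subset_normalClosure
    fin_cases i
    · exact Or.inl rfl
    · exact Or.inr (Or.inl rfl)
    · exact Or.inr (Or.inr rfl)
  simpa [gen, PresentedGroup.of] using this

def actL (i : Fin 3) : List (Fin 3) → List (Fin 3)
  | [] => [i]
  | j :: t => if i = j then t else i :: j :: t

abbrev Ch (l : List (Fin 3)) : Prop := l.IsChain (· ≠ ·)

lemma actL_chain {i : Fin 3} {l : List (Fin 3)} (h : Ch l) : Ch (actL i l) := by
  cases l with
  | nil => simp [actL, Ch]
  | cons j t =>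
    by_cases hij : i = j
    · simpa [actL, hij] using h.tail
    · rw [actL, if_neg hij]
      exact List.isChain_cons_cons.2 ⟨hij, h⟩

lemma actL_actL {i : Fin 3} {l : List (Fin 3)} (h : Ch l) : actL i (actL i l) = l := by
  cases l with
  | nil => simp [actL]
  | cons j t =>
    by_cases hij : i = j
    · subst hij
      simp only [actL, if_pos rfl]
      cases t with
      | nil => simp [actL]
      | cons k t' =>
        have : i ≠ k := (List.isChain_cons_cons.1 h).1
        simp [actL, this]
    · simp [actL, hij]

def S : Type := {l : List (Fin 3) // Ch l}

def e (i : Fin 3) : Equiv.Perm S where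
  toFun s := ⟨actL i s.1, actL_chain s.2⟩
  invFun s := ⟨actL i s.1, actL_chain s.2⟩
  left_inv s := Subtype.ext (actL_actL s.2)
  right_inv s := Subtype.ext (actL_actL s.2)

lemma rels_cond : ∀ r ∈ rels, FreeGroup.lift (fun i => e i) r = 1 := by
  intro r hr
  have e_sq : ∀ i : Fin 3, e i * e i = 1 := by
    intro i
    apply Equiv.ext
    intro s
    rw [Equiv.Perm.mul_apply, Equiv.Perm.one_apply]
    exact Subtype.ext (actL_actL s.2)
  rcases hr with h | h | h <;> subst h <;>
  · rw [map_mul, FreeGroup.lift_apply_of]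
    apply e_sq

def phi : G →* Equiv.Perm S := PresentedGroup.toGroup rels_cond

@[simp] lemma phi_gen (i : Fin 3) : phi (gen i) = e i := PresentedGroup.toGroup.of rels_cond

end Aux

namespace Aux

def pi (l : List (Fin 3)) : G := (l.map gen).prod

@[simp] lemma pi_nil : pi [] = 1 := rfl
@[simp] lemma pi_cons (i : Fin 3) (l : List (Fin 3)) : pi (i :: l) = gen i * pi l := by
  simp [pi]

/-- The key "retraction" lemma. -/
lemma K (w : G) : ∀ s : S, pi ((phi w) s).1 = w * pi s.1 := by
  let H : Subgroup G :=
    { carrier := {w : G | ∀ s : S, pi ((phi w) s).1 = w * pi s.1}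
      one_mem' := by intro s; simp
      mul_mem' := by
        intro a b ha hb s
        rw [map_mul, Equiv.Perm.mul_apply, ha, hb, mul_assoc]
      inv_mem' := by
        intro a ha s
        have := ha ((phi a⁻¹) s)
        rw [← Equiv.Perm.mul_apply, ← map_mul, mul_inv_cancel, map_one,
          Equiv.Perm.one_apply] at this
        rw [eq_inv_mul_iff_mul_eq, this] }
  have hgen : ∀ i : Fin 3, gen i ∈ H := by
    intro i s
    show pi ((phi (gen i)) s).1 = gen i * pi s.1
    rw [phi_gen]
    obtain ⟨l, hl⟩ := s
    cases l with
    | nil => show pi (actL i []) = gen i * pi []; simp [actL, pi]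
    | cons j t =>
      by_cases hij : i = j
      · subst hij
        show pi (actL i (i :: t)) = gen i * pi (i :: t)
        rw [actL, if_pos rfl, pi_cons, ← mul_assoc, gen_sq, one_mul]
      · show pi (actL i (j :: t)) = gen i * pi (j :: t)
        rw [actL, if_neg hij, pi_cons]
  exact PresentedGroup.generated_by rels H hgen w

def emp : S := ⟨[], List.isChain_nil⟩

def nf (w : G) : List (Fin 3) := ((phi w) emp).1

lemma pi_nf (w : G) : pi (nf w) = w := by
  have := K w emp
  simpa [nf, emp] using this

lemma nf_inj {w₁ w₂ : G} (h : nf w₁ = nf w₂) : w₁ = w₂ := by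
  rw [← pi_nf w₁, ← pi_nf w₂, h]

lemma nf_chain (w : G) : Ch (nf w) := ((phi w) emp).2

/-- Concatenation without cancellation. -/
lemma app : ∀ (l : List (Fin 3)) (s : S), Ch (l ++ s.1) → ((phi (pi l)) s).1 = l ++ s.1 := by
  intro l
  induction l with
  | nil => intro s h; simp
  | cons i t ih =>
    intro s h
    rw [List.cons_append] at h
    have ht : Ch (t ++ s.1) := h.tail
    rw [pi_cons, map_mul, Equiv.Perm.mul_apply, phi_gen]
    have h2 : ((phi (pi t)) s) = ⟨t ++ s.1, ht⟩ := Subtype.ext (ih s ht)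
    rw [h2]
    show actL i (t ++ s.1) = i :: (t ++ s.1)
    cases htl : t ++ s.1 with
    | nil => simp [actL]
    | cons j u =>
      have hij : i ≠ j := (List.isChain_cons_cons.1 (htl ▸ h)).1
      rw [actL, if_neg hij]

lemma nf_gen (i : Fin 3) : nf (gen i) = [i] := by rw [nf, phi_gen]; rfl

lemma nf_one : nf (1 : G) = [] := by rw [nf, map_one]; rfl

lemma gen_ne_one (i : Fin 3) : gen i ≠ 1 := by
  intro h
  have h1 := nf_gen i
  rw [h, nf_one] at h1
  exact absurd h1 (by simp)

end Aux

namespace Aux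

@[simp] lemma pi_append (l₁ l₂ : List (Fin 3)) : pi (l₁ ++ l₂) = pi l₁ * pi l₂ := by
  simp [pi]

lemma nf_pi {m : List (Fin 3)} (hm : Ch m) : nf (pi m) = m := by
  have := app m emp (by simpa [emp] using hm)
  simpa [nf, emp] using this

lemma nf_gen_mul (i : Fin 3) (w : G) : nf (gen i * w) = actL i (nf w) := by
  rw [nf, map_mul, Equiv.Perm.mul_apply, phi_gen]; rfl

lemma cent (i : Fin 3) {z : G} (h : z * gen i = gen i * z) : z = 1 ∨ z = gen i := by
  have hl : Ch (nf z) := nf_chain z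
  have hz : pi (nf z) = z := pi_nf z
  rcases (nf z).eq_nil_or_concat' with hnil | ⟨l', a, hcat⟩
  · left; rw [← hz, hnil, pi_nil]
  · have heq := congrArg nf h
    rw [nf_gen_mul] at heq
    by_cases hai : a = i
    · subst hai
      -- z * gen a = pi l'
      have hl' : Ch l' := (List.isChain_append.1 (hcat ▸ hl)).1
      have hz' : z * gen a = pi l' := by
        rw [← hz, hcat, pi_append]
        simp [mul_assoc, gen_sq]
      rw [hz', nf_pi hl'] at heq
      -- heq : l' = actL a (nf z), nf z = l' ++ [a]
      cases hcl' : l' with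
      | nil =>
        right
        rw [← hz, hcat, hcl']
        simp
      | cons j t =>
        exfalso
        rw [hcat, hcl'] at heq hl
        by_cases haj : a = j
        · subst haj
          rw [List.cons_append, actL, if_pos rfl] at heq
          -- heq : a :: t = t ++ [a]
          cases t with
          | nil =>
            simp at heq
            have := (List.isChain_cons_cons.1 hl).1
            exact this (by simp [heq])
          | cons x t' =>
            have hax : a = x := by
              have := congrArg (fun m => m.head?) heq
              simpa using this
            have := (List.isChain_cons_cons.1 hl).1
            exact this hax
        · rw [List.cons_append, actL, if_neg haj] at heq
          have := congrArg List.length heq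
          simp at this
    · -- no cancellation: nf (z * gen i) = nf z ++ [i]
      have hch : Ch (nf z ++ [i]) := by
        apply List.isChain_append.2
        refine ⟨hl, List.isChain_singleton i, ?_⟩
        intro x hx y hy
        rw [hcat] at hx
        simp at hx hy
        subst hx; subst hy
        exact hai
      have hz' : z * gen i = pi (nf z ++ [i]) := by rw [pi_append, hz]; simp [pi]
      rw [hz', nf_pi hch] at heq
      -- heq : nf z ++ [i] = actL i (nf z)
      exfalso
      obtain ⟨j, u, hju⟩ := List.exists_cons_of_ne_nil (by simp [hcat] : nf z ≠ [])
      rw [hju] at heq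
      by_cases hij : i = j
      · rw [actL, if_pos hij] at heq
        have := congrArg List.length heq
        simp at this
        omega
      · rw [actL, if_neg hij] at heq
        have := congrArg (fun m => m.head?) heq
        simp at this
        exact hij this.symm

end Aux

namespace Aux

lemma hD : D = gen 2 * gen 1 * gen 0 := rfl

lemma nf_D_mul (w : G) : nf (D * w) = actL 2 (actL 1 (actL 0 (nf w))) := by
  have h : D * w = gen 2 * (gen 1 * (gen 0 * w)) := by
    rw [hD, mul_assoc, mul_assoc]
  rw [h, nf_gen_mul, nf_gen_mul, nf_gen_mul]

def L : ℕ → List (Fin 3)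
  | 0 => []
  | k + 1 => 2 :: 1 :: 0 :: L k

lemma L_len (k : ℕ) : (L k).length = 3 * k := by
  induction k with
  | zero => rfl
  | succ n ih => simp [L, ih]; omega

lemma nf_D_pow (k : ℕ) : nf (D ^ k) = L k := by
  induction k with
  | zero => simpa [L] using nf_one
  | succ n ih =>
    rw [pow_succ', nf_D_mul, ih]
    cases n with
    | zero => rfl
    | succ m =>
      show actL 2 (actL 1 (actL 0 (2 :: 1 :: 0 :: L m))) = L (m + 2)
      rw [actL, if_neg (by decide), actL, if_neg (by decide), actL, if_neg (by decide)]
      rfl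

def M : ℕ → List (Fin 3)
  | 0 => [2, 1]
  | k + 1 => 2 :: 1 :: 0 :: M k

lemma M_head (k : ℕ) : ∃ t, M k = 2 :: t := by
  cases k with
  | zero => exact ⟨[1], rfl⟩
  | succ n => exact ⟨_, rfl⟩

lemma nf_D_pow_A (k : ℕ) : nf (D ^ (k + 1) * gen 0) = M k := by
  induction k with
  | zero =>
    rw [pow_one, nf_D_mul, nf_gen]
    rfl
  | succ n ih =>
    rw [pow_succ', mul_assoc, nf_D_mul, ih]
    obtain ⟨t, ht⟩ := M_head n
    rw [ht]
    rw [actL, if_neg (by decide), actL, if_neg (by decide), actL, if_neg (by decide), ← ht]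
    rfl

lemma nf_D_pow_gen (k : ℕ) (i : Fin 3) (hi : i ≠ 0) : nf (D ^ k * gen i) = L k ++ [i] := by
  induction k with
  | zero => simpa [L] using nf_gen i
  | succ n ih =>
    rw [pow_succ', mul_assoc, nf_D_mul, ih]
    have h0 : actL 0 (L n ++ [i]) = 0 :: (L n ++ [i]) := by
      cases hn : L n with
      | nil => simp [actL]; exact fun hh => hi hh.symm
      | cons j u =>
        cases n with
        | zero => simp [L] at hn
        | succ m =>
          have hj : j = 2 := by
            rw [L] at hn
            injection hn with h1 _
            exact h1.symm
          rw [List.cons_append, actL, hj, if_neg (by decide)]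
    rw [h0, actL, if_neg (by decide), actL, if_neg (by decide)]
    show (2 : Fin 3) :: 1 :: 0 :: (L n ++ [i]) = L (n + 1) ++ [i]
    rfl

end Aux

namespace Aux

lemma D_inf : ¬ IsOfFinOrder D := by
  intro h
  obtain ⟨n, hn, h1⟩ := isOfFinOrder_iff_pow_eq_one.1 h
  have := congrArg nf h1
  rw [nf_D_pow, nf_one] at this
  cases n with
  | zero => omega
  | succ m => exact absurd this (by simp [L])

lemma D_zpow_eq_one {m : ℤ} (h : D ^ m = 1) : m = 0 := by
  by_contra hm
  have hpos : 0 < m.natAbs := Int.natAbs_pos.2 hm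
  have hpow : D ^ m.natAbs = 1 := by
    rcases Int.natAbs_eq m with he | he
    · rw [← zpow_natCast, ← he, h]
    · rw [← zpow_natCast]
      have : D ^ (-(m.natAbs : ℤ)) = 1 := by rw [← he, h]
      rw [zpow_neg, inv_eq_one] at this
      exact this
  exact D_inf (isOfFinOrder_iff_pow_eq_one.2 ⟨m.natAbs, hpos, hpow⟩)

lemma conj_nat (n : ℕ) (i i' : Fin 3) (h : D ^ (n + 1) * gen i = gen i' * D ^ (n + 1)) :
    i = i' := by
  have heq := congrArg nf h
  rw [nf_gen_mul, nf_D_pow] at heq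
  by_cases hi : i = 0
  · subst hi
    rw [nf_D_pow_A] at heq
    obtain ⟨t, ht⟩ := M_head n
    fin_cases i'
    · rfl
    · exfalso
      rw [show L (n+1) = 2 :: 1 :: 0 :: L n from rfl, actL, if_neg (by decide), ht] at heq
      exact absurd (List.head_eq_of_cons_eq heq) (by decide)
    · exfalso
      rw [show L (n+1) = 2 :: 1 :: 0 :: L n from rfl, actL, if_pos (by decide), ht] at heq
      exact absurd (List.head_eq_of_cons_eq heq) (by decide)
  · exfalso
    rw [nf_D_pow_gen (n+1) i hi] at heq
    by_cases hi' : i' = (2 : Fin 3)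
    · subst hi'
      rw [show L (n+1) = 2 :: 1 :: 0 :: L n from rfl, actL, if_pos rfl] at heq
      have := congrArg List.length heq
      simp [L_len] at this
      omega
    · rw [show L (n+1) = 2 :: 1 :: 0 :: L n from rfl, actL,
        if_neg hi'] at heq
      -- heq : (2::1::0::L n) ++ [i] = i' :: 2 :: 1 :: 0 :: L n
      rw [List.cons_append, List.cons_append] at heq
      have h2 := List.head_eq_of_cons_eq (List.tail_eq_of_cons_eq heq)
      exact absurd h2 (by decide)

lemma conj_zpow (k : ℤ) (i i' : Fin 3) (h : D ^ k * gen i * (D ^ k)⁻¹ = gen i') :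
    i = i' ∧ k = 0 := by
  have hcomm : D ^ k * gen i = gen i' * D ^ k := by
    rw [← h]; group
  have hii : i = i' := by
    rcases lt_trichotomy k 0 with hk | hk | hk
    · obtain ⟨n, hn⟩ : ∃ n : ℕ, -k = (n : ℤ) + 1 := by
        refine ⟨(-k).toNat - 1, ?_⟩
        omega
      have h2 : D ^ (n + 1) * gen i' = gen i * D ^ (n + 1) := by
        have : D ^ (-k) * gen i' = gen i * D ^ (-k) := by
          rw [zpow_neg]
          calc (D ^ k)⁻¹ * gen i'
              = (D ^ k)⁻¹ * (gen i' * D ^ k) * (D ^ k)⁻¹ := by group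
            _ = (D ^ k)⁻¹ * (D ^ k * gen i) * (D ^ k)⁻¹ := by rw [hcomm]
            _ = gen i * (D ^ k)⁻¹ := by group
        rw [hn, zpow_add, zpow_natCast, zpow_one] at this
        rw [pow_succ]
        exact this
      exact (conj_nat n i' i h2).symm
    · subst hk
      simp at hcomm
      have := congrArg nf hcomm
      rw [nf_gen, nf_gen] at this
      exact List.head_eq_of_cons_eq this
    · obtain ⟨n, hn⟩ : ∃ n : ℕ, k = (n : ℤ) + 1 := ⟨k.toNat - 1, by omega⟩
      have h2 : D ^ (n + 1) * gen i = gen i' * D ^ (n + 1) := by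
        have := hcomm
        rw [hn, zpow_add, zpow_natCast, zpow_one, ← pow_succ] at this
        exact this
      exact conj_nat n i i' h2
  refine ⟨hii, ?_⟩
  subst hii
  have hc : D ^ k * gen i = gen i * D ^ k := hcomm
  rcases cent i hc.symm.symm with h1 | h1
  · exact D_zpow_eq_one h1
  · exfalso
    have h2 : D ^ k * D ^ k = 1 := by rw [h1, gen_sq]
    rw [← zpow_add] at h2
    have := D_zpow_eq_one h2
    have hk0 : k = 0 := by omega
    rw [hk0] at h1
    exact gen_ne_one i (by rw [← h1]; rfl)

end Aux

namespace Aux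

lemma main_cent (i : Fin 3) (g : G) (hg : IsConj (gen i) g) (m : ℤ)
    (hm : D ^ m * g * (D ^ m)⁻¹ = g) : m = 0 := by
  obtain ⟨x, hx⟩ := isConj_iff.1 hg
  set z := x⁻¹ * D ^ m * x with hz
  have hxz : x * z * x⁻¹ = D ^ m := by rw [hz]; group
  have hcz : z * gen i = gen i * z := by
    have h1 : z * gen i * z⁻¹ = gen i := by
      have h2 : z * gen i * z⁻¹ = x⁻¹ * (D ^ m * g * (D ^ m)⁻¹) * x := by
        rw [hz, ← hx]; group
      rw [h2, hm, ← hx]; group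
    calc z * gen i = z * gen i * z⁻¹ * z := by group
      _ = gen i * z := by rw [h1]
  rcases cent i hcz with h1 | h1
  · apply D_zpow_eq_one
    rw [← hxz, h1]; group
  · have hDm : D ^ m = x * gen i * x⁻¹ := by rw [← hxz, h1]
    have h2 : D ^ (m + m) = 1 := by
      rw [zpow_add, hDm]
      calc x * gen i * x⁻¹ * (x * gen i * x⁻¹) = x * (gen i * gen i) * x⁻¹ := by group
        _ = 1 := by rw [gen_sq]; group
    have := D_zpow_eq_one h2
    omega

lemma Q_inj {m m' : ℤ} {i i' : Fin 3}
    (h : D ^ m * gen i * (D ^ m)⁻¹ = D ^ m' * gen i' * (D ^ m')⁻¹) :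
    m = m' ∧ i = i' := by
  have h6 : (D ^ m')⁻¹ * D ^ m = D ^ (m - m') := by
    rw [← zpow_neg, ← zpow_add]
    congr 1
    omega
  have h7 : D ^ (m - m') * gen i * (D ^ (m - m'))⁻¹ = gen i' := by
    rw [← h6]
    calc (D ^ m')⁻¹ * D ^ m * gen i * ((D ^ m')⁻¹ * D ^ m)⁻¹
        = (D ^ m')⁻¹ * (D ^ m * gen i * (D ^ m)⁻¹) * D ^ m' := by group
      _ = (D ^ m')⁻¹ * (D ^ m' * gen i' * (D ^ m')⁻¹) * D ^ m' := by rw [h]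
      _ = gen i' := by group
  obtain ⟨hi, hk⟩ := conj_zpow (m - m') i i' h7
  exact ⟨by omega, hi⟩

end Aux


/-- D has infinite order; no nontrivial power of D centralizes a conjugate of A, B or C;
in particular the elements P_j are pairwise distinct. -/
theorem stmt18 (P : ℤ → G)
    (hP0 : ∀ m : ℤ, P (3 * m) = D ^ m * A * (D ^ m)⁻¹)
    (hP1 : ∀ m : ℤ, P (3 * m + 1) = D ^ m * B * (D ^ m)⁻¹)
    (hP2 : ∀ m : ℤ, P (3 * m + 2) = D ^ m * C * (D ^ m)⁻¹) :
    ¬ IsOfFinOrder D ∧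
    (∀ g : G, (IsConj A g ∨ IsConj B g ∨ IsConj C g) →
      ∀ m : ℤ, D ^ m * g * (D ^ m)⁻¹ = g → m = 0) ∧
    Function.Injective P := by
  have hA : A = Aux.gen 0 := rfl
  have hB : B = Aux.gen 1 := rfl
  have hC : C = Aux.gen 2 := rfl
  refine ⟨Aux.D_inf, ?_, ?_⟩
  · rintro g (hg | hg | hg) m hm
    · exact Aux.main_cent 0 g (hA ▸ hg) m hm
    · exact Aux.main_cent 1 g (hB ▸ hg) m hm
    · exact Aux.main_cent 2 g (hC ▸ hg) m hm
  · have Pform : ∀ j : ℤ, ∃ (m : ℤ) (i : Fin 3),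
        j = 3 * m + (i : ℤ) ∧ P j = D ^ m * Aux.gen i * (D ^ m)⁻¹ := by
      intro j
      have hdm := Int.mul_ediv_add_emod j 3
      have hr : j % 3 = 0 ∨ j % 3 = 1 ∨ j % 3 = 2 := by omega
      rcases hr with hr | hr | hr
      · refine ⟨j / 3, 0, by omega, ?_⟩
        have h := hP0 (j / 3)
        rw [show 3 * (j / 3) = j by omega] at h
        rw [h, hA]
      · refine ⟨j / 3, 1, by omega, ?_⟩
        have h := hP1 (j / 3)
        rw [show 3 * (j / 3) + 1 = j by omega] at h
        rw [h, hB]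
      · refine ⟨j / 3, 2, by omega, ?_⟩
        have h := hP2 (j / 3)
        rw [show 3 * (j / 3) + 2 = j by omega] at h
        rw [h, hC]
    intro j k hjk
    obtain ⟨m, i, hj, hPj⟩ := Pform j
    obtain ⟨m', i', hk, hPk⟩ := Pform k
    rw [hPj, hPk] at hjk
    obtain ⟨hmm, hii⟩ := Aux.Q_inj hjk
    have : (i : ℤ) = (i' : ℤ) := by exact_mod_cast congrArg (fun t : Fin 3 => (t : ℤ)) hii
    omega
end
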